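/- arXiv:1404.4428 — 3 statements merged into one kernel-verified Lean document; each statement's English description precedes it below -/
import Mathlib

section
/- Let d and n be positive integers, m an integer with gcd(m, n) = 1, and ε ∈ {1, -1}. Then S(ε + d·n·m, d·n²) = ε·(2/(d·n²) + d − 3), where S(m,n) = 12·s(m,n) is the normalized Dedekind sum. -/
open scoped Classical
open Finset

/-- The sawtooth function `((x))`. -/
noncomputable def saw (x : ℝ) : ℝ :=
  if ∃ z : ℤ, (z : ℝ) = x then 0 else x - ⌊x⌋ - 1/2

/-- The classical Dedekind sum `s(m,n)`. -/
noncomputable def ded (m n : ℤ) : ℝ :=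
  ∑ k ∈ Finset.Icc (1 : ℤ) n, saw ((k : ℝ) / n) * saw ((m : ℝ) * k / n)

/-- The normalized Dedekind sum `S(m,n) = 12 s(m,n)`. -/
noncomputable def Sded (m n : ℤ) : ℝ := 12 * ded m n

lemma saw_int (z : ℤ) : saw (z:ℝ) = 0 := by unfold saw; rw [if_pos ⟨z, rfl⟩]

lemma saw_add_int (x : ℝ) (z : ℤ) : saw (x + z) = saw x := by
  unfold saw
  by_cases h : ∃ w : ℤ, (w:ℝ) = x
  · rw [if_pos h]
    obtain ⟨w, rfl⟩ := h
    rw [if_pos ⟨w + z, by push_cast; ring⟩]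
  · rw [if_neg h, if_neg (by rintro ⟨w, hw⟩; exact h ⟨w - z, by push_cast; linarith⟩)]
    rw [Int.floor_add_intCast]; push_cast; ring

lemma saw_neg (x : ℝ) : saw (-x) = - saw x := by
  unfold saw
  by_cases h : ∃ w : ℤ, (w:ℝ) = x
  · rw [if_pos h]; obtain ⟨w, rfl⟩ := h; rw [if_pos ⟨-w, by push_cast; ring⟩]; simp
  · have h' : ¬ ∃ w : ℤ, (w:ℝ) = -x := by
      rintro ⟨w, hw⟩; exact h ⟨-w, by push_cast; linarith⟩
    have hne : (⌊x⌋ : ℝ) ≠ x := fun hc => h ⟨⌊x⌋, hc⟩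
    have hfl : ⌊x⌋ ≤ x := Int.floor_le x
    have hfu : x < ⌊x⌋ + 1 := Int.lt_floor_add_one x
    have : ⌊-x⌋ = -⌊x⌋ - 1 := by
      rw [Int.floor_eq_iff]; push_cast
      constructor <;> [linarith; (cases lt_or_eq_of_le hfl with
        | inl hlt => linarith
        | inr he => exact absurd he hne)]
    rw [if_neg h, if_neg h', this]; push_cast; ring

lemma saw_lo (x : ℝ) (hni : ¬ ∃ z : ℤ, (z:ℝ) = x) (h0 : 0 < x) (h1 : x < 1) :
    saw x = x - 1/2 := by
  unfold saw
  rw [if_neg hni, show ⌊x⌋ = 0 by rw [Int.floor_eq_iff] <;> simp <;> constructor <;> linarith]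
  simp

lemma saw_hi (x : ℝ) (hni : ¬ ∃ z : ℤ, (z:ℝ) = x) (h0 : 1 < x) (h1 : x < 2) :
    saw x = x - 3/2 := by
  unfold saw
  rw [if_neg hni, show ⌊x⌋ = 1 by rw [Int.floor_eq_iff] <;> push_cast <;> constructor <;> linarith]
  push_cast; ring

lemma not_int_of_Ioo (x : ℝ) (h0 : 0 < x) (h1 : x < 1) : ¬ ∃ z : ℤ, (z:ℝ) = x := by
  rintro ⟨z, rfl⟩
  have h0' : 0 < z := by exact_mod_cast h0
  have h1' : z < 1 := by exact_mod_cast h1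
  omega

section helpers
lemma sum_Ioc_split (f : ℤ → ℝ) (a b c : ℤ) (h1 : a ≤ b) (h2 : b ≤ c) :
    ∑ i ∈ Finset.Ioc a c, f i = ∑ i ∈ Finset.Ioc a b, f i + ∑ i ∈ Finset.Ioc b c, f i := by
  rw [← Finset.sum_union, Finset.Ioc_union_Ioc_eq_Ioc h1 h2]
  rw [Finset.disjoint_left]; intro x hx hx'; simp at hx hx'; omega

lemma sum_Ioc_succ_top (f : ℤ → ℝ) (b : ℤ) (h : 0 ≤ b) :
    ∑ i ∈ Finset.Ioc 0 (b+1), f i = (∑ i ∈ Finset.Ioc 0 b, f i) + f (b+1) := by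
  rw [sum_Ioc_split f 0 b (b+1) h (by omega)]
  congr 1
  have : Finset.Ioc b (b+1) = {b+1} := by ext x; simp; omega
  simp [this]

lemma sum_Ioc_translate (f : ℤ → ℝ) (a b t : ℤ) :
    ∑ i ∈ Finset.Ioc (t+a) (t+b), f i = ∑ i ∈ Finset.Ioc a b, f (t + i) := by
  rw [← Finset.map_add_left_Ioc, Finset.sum_map]
  rfl

lemma sumIoc_id : ∀ L:ℤ, 0 ≤ L → ∑ i ∈ Finset.Ioc (0:ℤ) L, (i:ℝ) = L*(L+1)/2 := by
  refine fun L h => Int.le_induction (motive := fun L _ => ∑ i ∈ Finset.Ioc (0:ℤ) L, (i:ℝ) = L*(L+1)/2) ?_ ?_ L h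
  · simp
  · intro M hM ih; rw [sum_Ioc_succ_top _ _ hM, ih]; push_cast; ring

lemma sumIoc_sq : ∀ L:ℤ, 0 ≤ L → ∑ i ∈ Finset.Ioc (0:ℤ) L, (i:ℝ)^2 = L*(L+1)*(2*L+1)/6 := by
  refine fun L h => Int.le_induction (motive := fun L _ => ∑ i ∈ Finset.Ioc (0:ℤ) L, (i:ℝ)^2 = L*(L+1)*(2*L+1)/6) ?_ ?_ L h
  · simp
  · intro M hM ih; rw [sum_Ioc_succ_top _ _ hM, ih]; push_cast; ring

lemma card_Ioc_real (L : ℤ) (h : 0 ≤ L) : ((Finset.Ioc (0:ℤ) L).card : ℝ) = L := by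
  rw [Int.card_Ioc]
  rw [show ((L-0).toNat:ℝ) = (((L-0).toNat : ℤ) : ℝ) by push_cast; ring, Int.toNat_of_nonneg (by omega)]
  push_cast; ring

lemma sumIoc_affine (L : ℤ) (h : 0 ≤ L) (A B : ℝ) :
    ∑ i ∈ Finset.Ioc (0:ℤ) L, (A + B*(i:ℝ)) = L*A + B*(L*(L+1)/2) := by
  rw [Finset.sum_add_distrib, ← Finset.mul_sum, sumIoc_id L h, Finset.sum_const, nsmul_eq_mul,
    card_Ioc_real L h]

lemma double_sum (f : ℤ → ℝ) (n : ℤ) (hn : 0 < n) :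
    ∀ M, 0 ≤ M → ∑ k ∈ Finset.Ioc 0 (n*M), f k
      = ∑ j ∈ Finset.Ioc 0 M, ∑ r ∈ Finset.Ioc 0 n, f (n*(j-1) + r) := by
  refine fun M h => Int.le_induction
    (motive := fun M _ => ∑ k ∈ Finset.Ioc 0 (n*M), f k
      = ∑ j ∈ Finset.Ioc 0 M, ∑ r ∈ Finset.Ioc 0 n, f (n*(j-1) + r)) ?_ ?_ M h
  · simp
  · intro M hM ih
    have e1 : n*(M+1) = n*M + n := by ring
    have e2 : ∑ i ∈ Finset.Ioc (n*M) (n*M+n), f i = ∑ r ∈ Finset.Ioc 0 n, f (n*M + r) := by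
      have := sum_Ioc_translate f 0 n (n*M); simpa using this
    rw [e1, sum_Ioc_split f 0 (n*M) (n*M+n) (by positivity) (by omega), e2,
      sum_Ioc_succ_top _ M hM, ← ih]
    congr 1
    apply Finset.sum_congr rfl
    intro r _
    congr 1
    ring

lemma chi_sum (M e : ℤ) (he1 : 0 ≤ e) (he2 : e ≤ M) (X : ℤ → ℝ) :
    ∑ j ∈ Finset.Ioc (0:ℤ) M, (if M - e < j then (1:ℝ) else 0) * X j
      = ∑ j ∈ Finset.Ioc (M-e) M, X j := by
  have h : Finset.Ioc (M-e) M = (Finset.Ioc (0:ℤ) M).filter (fun j => M - e < j) := by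
    ext x; simp; omega
  rw [h, Finset.sum_filter]
  apply Finset.sum_congr rfl; intro j _; by_cases h : M - e < j <;> simp [h]
end helpers

lemma perm_sum (n : ℤ) (hn : 0 < n) (m : ℤ) (hm : Int.gcd m n = 1) (h : ℤ → ℝ) :
    ∑ r ∈ Finset.Ioc 0 n, h (m * r % n) = ∑ c ∈ Finset.Ico 0 n, h c := by
  obtain ⟨u, v, huv⟩ := Int.isCoprime_iff_gcd_eq_one.mpr hm
  have key : ∀ a : ℤ, (m * (u * a % n)) % n = a % n := by
    intro a
    have h1 : (m * (u * a % n)) % n = (m * (u * a)) % n := by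
      rw [Int.mul_emod, Int.emod_emod_of_dvd _ dvd_rfl, ← Int.mul_emod]
    have h2 : m * (u * a) = a + n * (-(v * a)) := by linear_combination a * huv
    rw [h1, h2, Int.add_mul_emod_self_left]
  have key2 : ∀ a : ℤ, (u * (m * a % n)) % n = a % n := by
    intro a
    have h1 : (u * (m * a % n)) % n = (u * (m * a)) % n := by
      rw [Int.mul_emod, Int.emod_emod_of_dvd _ dvd_rfl, ← Int.mul_emod]
    have h2 : u * (m * a) = a + n * (-(v * a)) := by linear_combination a * huv
    rw [h1, h2, Int.add_mul_emod_self_left]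
  have hn' : n ≠ 0 := by omega
  refine Finset.sum_nbij' (fun r => m * r % n)
    (fun c => if u * c % n = 0 then n else u * c % n) ?_ ?_ ?_ ?_ ?_
  · intro r hr
    simp only [Finset.mem_Ico]
    exact ⟨Int.emod_nonneg _ hn', Int.emod_lt_of_pos _ hn⟩
  · intro c hc
    simp only [Finset.mem_Ico] at hc
    by_cases hb : u * c % n = 0
    · simp [hb]; omega
    · rw [if_neg hb]
      simp only [Finset.mem_Ioc]
      have := Int.emod_nonneg (u*c) hn'
      have := Int.emod_lt_of_pos (u*c) hn
      constructor <;> omega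
  · intro r hr
    simp only [Finset.mem_Ioc] at hr
    have hk := key2 r
    by_cases hrn : r = n
    · rw [hrn, show m * n % n = 0 from by simp [Int.mul_emod_right]]
      simp
    · have hrm : r % n = r := Int.emod_eq_of_lt (by omega) (by omega)
      rw [hrm] at hk
      rw [if_neg (by rw [hk]; omega), hk]
  · intro c hc
    simp only [Finset.mem_Ico] at hc
    have hk := key c
    have hcm : c % n = c := Int.emod_eq_of_lt (by omega) (by omega)
    rw [hcm] at hk
    by_cases hb : u * c % n = 0
    · rw [if_pos hb]
      rw [hb] at hk
      simp at hk
      simp [Int.mul_emod_right, hk]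
    · rw [if_neg hb, hk]
  · intro r hr; rfl

lemma point (d n m r j : ℤ) (hd : 0 < d) (hn : 0 < n) (hr1 : 0 < r) (hr2 : r ≤ n)
    (hj1 : 0 < j) (hj2 : j ≤ d*n) :
    saw (((n*(j-1)+r : ℤ):ℝ)/((d*n^2 : ℤ):ℝ))
      * saw (((1+d*n*m : ℤ):ℝ)*((n*(j-1)+r : ℤ):ℝ)/((d*n^2:ℤ):ℝ))
    = (((n*(j-1)+r : ℤ):ℝ)/((d*n^2:ℤ):ℝ) - 1/2)
      * (((n*(j-1)+r : ℤ):ℝ)/((d*n^2:ℤ):ℝ) + ((m*r % n : ℤ):ℝ)/(n:ℝ) - 1/2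
         - (if d*n - d*(m*r % n) < j then 1 else 0))
      - (if j = d*n ∧ r = n then (1/4:ℝ) else 0) := by
  set k : ℤ := n*(j-1)+r with hk
  set N : ℤ := d*n^2 with hN
  set c : ℤ := m*r % n with hc
  have hn' : (n:ℝ) ≠ 0 := by exact_mod_cast hn.ne'
  have hN0 : (0:ℤ) < N := by positivity
  have hNr : (0:ℝ) < (N:ℝ) := by exact_mod_cast hN0
  have hc0 : 0 ≤ c := Int.emod_nonneg _ (by omega)
  have hcn : c < n := Int.emod_lt_of_pos _ hn
  have hk1 : 0 < k := by nlinarith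
  have hkN : k ≤ N := by nlinarith
  have hx0 : (0:ℝ) < (k:ℝ)/(N:ℝ) := by positivity
  -- rewrite second saw argument
  have hq := Int.mul_ediv_add_emod (m*r) n
  have harg : ((1+d*n*m : ℤ):ℝ)*((k : ℤ):ℝ)/((N:ℤ):ℝ)
      = ((k:ℝ)/(N:ℝ) + (c:ℝ)/(n:ℝ)) + ((m*(j-1) + (m*r)/n : ℤ):ℝ) := by
    have hqR : (n:ℝ) * (((m*r)/n : ℤ):ℝ) + (c:ℝ) = (m:ℝ)*(r:ℝ) := by
      rw [hc]; exact_mod_cast hq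
    push_cast
    rw [hk, hN]
    push_cast
    field_simp
    linear_combination -(d:ℝ)*(n:ℝ)*hqR
  rw [harg, saw_add_int]
  by_cases hend : j = d*n ∧ r = n
  · obtain ⟨hj', hr'⟩ := hend
    have hkNe : k = N := by rw [hk, hN, hj', hr']; ring
    have hcz : c = 0 := by rw [hc, hr']; simp [Int.mul_emod_left]
    have h1 : (k:ℝ)/(N:ℝ) = 1 := by rw [hkNe]; exact div_self hNr.ne'
    have hcond : ¬ (d*n - d*c < j) := by rw [hcz, hj']; simp
    rw [if_pos (show j = d*n ∧ r = n from ⟨hj', hr'⟩), if_neg hcond, h1, hcz]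
    rw [show ((1:ℝ) + ((0:ℤ):ℝ)/(n:ℝ)) = ((1:ℤ):ℝ) by push_cast; simp, saw_int]
    norm_num
  · have hkN' : k < N := by
      rcases not_and_or.mp hend with h | h
      · have : j ≤ d*n - 1 := by omega
        nlinarith
      · have : r ≤ n - 1 := by omega
        nlinarith
    have hx1 : (k:ℝ)/(N:ℝ) < 1 := (div_lt_one hNr).mpr (by exact_mod_cast hkN')
    have hni1 := not_int_of_Ioo _ hx0 hx1
    rw [saw_lo _ hni1 hx0 hx1, if_neg hend]
    by_cases hrn : r = n
    · have hcz : c = 0 := by rw [hc, hrn]; simp [Int.mul_emod_left]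
      have hcond : ¬ (d*n - d*c < j) := by rw [hcz]; omega
      rw [if_neg hcond, hcz]
      simp only [Int.cast_zero, zero_div, add_zero]
      rw [saw_lo _ hni1 hx0 hx1]
      ring
    · have hrn' : r < n := by omega
      have hy : (k:ℝ)/(N:ℝ) + (c:ℝ)/(n:ℝ) = ((k + d*n*c : ℤ):ℝ)/((N:ℤ):ℝ) := by
        rw [hN]; push_cast; field_simp
      have hnonint : ¬ ∃ z:ℤ, (z:ℝ) = ((k + d*n*c : ℤ):ℝ)/((N:ℤ):ℝ) := by
        rintro ⟨z, hz⟩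
        have hzN : z * N = k + d*n*c := by
          have h2 : (z:ℝ) * (N:ℝ) = ((k + d*n*c : ℤ):ℝ) := by
            rw [hz]; field_simp
          exact_mod_cast h2
        have hw : r = n*(z*d*n - (j-1) - d*c) := by
          rw [hN] at hzN
          linear_combination -hzN
        rcases le_or_gt (z*d*n - (j-1) - d*c) 0 with h0 | h1
        · nlinarith
        · nlinarith
      rw [hy]
      have hdc0 : (0:ℝ) < ((k + d*n*c : ℤ):ℝ) := by
        have : (0:ℤ) < k + d*n*c := by nlinarith
        exact_mod_cast this
      have hdn : (0:ℤ) < d*n := by positivity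
      by_cases hcond : d*n - d*c < j
      · have hlowZ : N < k + d*n*c := by
          have h1 : d*n - d*c ≤ j - 1 := by omega
          have h2 : n*(d*n - d*c) ≤ n*(j-1) := mul_le_mul_of_nonneg_left h1 (le_of_lt hn)
          have h3 : n*(d*n - d*c) = N - d*n*c := by rw [hN]; ring
          rw [hk]; linarith
        have huppZ : k + d*n*c < 2*N := by
          have h1 : d*n*c ≤ d*n*(n-1) := mul_le_mul_of_nonneg_left (by omega) (by positivity)
          have h2 : d*n*(n-1) = N - d*n := by rw [hN]; ring
          linarith
        have hlow : (1:ℝ) < ((k + d*n*c : ℤ):ℝ)/((N:ℤ):ℝ) := by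
          rw [lt_div_iff₀ hNr]; rw [one_mul]; exact_mod_cast hlowZ
        have hupp : ((k + d*n*c : ℤ):ℝ)/((N:ℤ):ℝ) < 2 := by
          rw [div_lt_iff₀ hNr]
          have : ((k + d*n*c : ℤ):ℝ) < ((2*N : ℤ):ℝ) := by exact_mod_cast huppZ
          push_cast at this ⊢; linarith
        rw [saw_hi _ hnonint hlow hupp, if_pos hcond]
        ring
      · have huppZ : k + d*n*c < N := by
          have hj' : j - 1 ≤ d*n - d*c - 1 := by omega
          have h2 : n*(j-1) ≤ n*(d*n - d*c - 1) := mul_le_mul_of_nonneg_left hj' (le_of_lt hn)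
          have h3 : n*(d*n - d*c - 1) = N - n*(d*c) - n := by rw [hN]; ring
          have h4 : n*(d*c) = d*n*c := by ring
          rw [hk]; linarith
        have hupp : ((k + d*n*c : ℤ):ℝ)/((N:ℤ):ℝ) < 1 := by
          rw [div_lt_one hNr]; exact_mod_cast huppZ
        have hlow : (0:ℝ) < ((k + d*n*c : ℤ):ℝ)/((N:ℤ):ℝ) := by positivity
        rw [saw_lo _ hnonint hlow hupp, if_neg hcond]
        ring

lemma S_lin (d n r : ℤ) (hd : 0 < d) (hn : 0 < n) :
    ∑ j ∈ Finset.Ioc (0:ℤ) (d*n), (((n*(j-1)+r : ℤ):ℝ)/((d*n^2:ℤ):ℝ) - 1/2)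
      = (r:ℝ)/(n:ℝ) - 1/2 := by
  have h1 : ∀ j : ℤ, (((n*(j-1)+r : ℤ):ℝ)/((d*n^2:ℤ):ℝ) - 1/2)
      = ((((r:ℝ)-(n:ℝ))/((d:ℝ)*(n:ℝ)^2) - 1/2) + ((n:ℝ)/((d:ℝ)*(n:ℝ)^2))*(j:ℝ)) := by
    intro j; push_cast; field_simp; ring
  rw [Finset.sum_congr rfl (fun j _ => h1 j), sumIoc_affine _ (by positivity)]
  push_cast; field_simp; ring

lemma dedInnerSum (d n m r : ℤ) (hd : 0 < d) (hn : 0 < n) (hr1 : 0 < r) (hr2 : r ≤ n) :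
    ∑ j ∈ Finset.Ioc (0:ℤ) (d*n),
      ((((n*(j-1)+r : ℤ):ℝ)/((d*n^2:ℤ):ℝ) - 1/2)
        * (((n*(j-1)+r : ℤ):ℝ)/((d*n^2:ℤ):ℝ) + ((m*r % n : ℤ):ℝ)/(n:ℝ) - 1/2
           - (if d*n - d*(m*r % n) < j then (1:ℝ) else 0))
        - (if j = d*n ∧ r = n then (1/4:ℝ) else 0))
    = (∑ j ∈ Finset.Ioc (0:ℤ) (d*n), (((n*(j-1)+r : ℤ):ℝ)/((d*n^2:ℤ):ℝ) - 1/2)^2)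
      + (d:ℝ)*((m*r % n : ℤ):ℝ)^2/(2*(n:ℝ)) - (d:ℝ)*((m*r % n : ℤ):ℝ)/2
      - (if r = n then (1/4:ℝ) else 0) := by
  have hn0 : n ≠ 0 := by omega
  have hc0 : 0 ≤ m*r % n := Int.emod_nonneg _ hn0
  have hcn : m*r % n < n := Int.emod_lt_of_pos _ hn
  have he0 : 0 ≤ d*(m*r % n) := by positivity
  have heM : d*(m*r % n) ≤ d*n := mul_le_mul_of_nonneg_left hcn.le hd.le
  have expand : ∀ j ∈ Finset.Ioc (0:ℤ) (d*n),
      ((((n*(j-1)+r : ℤ):ℝ)/((d*n^2:ℤ):ℝ) - 1/2)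
        * (((n*(j-1)+r : ℤ):ℝ)/((d*n^2:ℤ):ℝ) + ((m*r % n : ℤ):ℝ)/(n:ℝ) - 1/2
           - (if d*n - d*(m*r % n) < j then (1:ℝ) else 0))
        - (if j = d*n ∧ r = n then (1/4:ℝ) else 0))
      = ((((n*(j-1)+r : ℤ):ℝ)/((d*n^2:ℤ):ℝ) - 1/2)^2
        + (((m*r % n : ℤ):ℝ)/(n:ℝ)) * (((n*(j-1)+r : ℤ):ℝ)/((d*n^2:ℤ):ℝ) - 1/2)
        - (if d*n - d*(m*r % n) < j then (1:ℝ) else 0) * (((n*(j-1)+r : ℤ):ℝ)/((d*n^2:ℤ):ℝ) - 1/2)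
        - (if j = d*n ∧ r = n then (1/4:ℝ) else 0)) := by
    intro j _; ring
  rw [Finset.sum_congr rfl expand]
  rw [show ∀ X Y Z W : ℤ → ℝ, (∑ j ∈ Finset.Ioc (0:ℤ) (d*n), (X j + Y j - Z j - W j))
      = (∑ j ∈ Finset.Ioc (0:ℤ) (d*n), X j) + (∑ j ∈ Finset.Ioc (0:ℤ) (d*n), Y j)
        - (∑ j ∈ Finset.Ioc (0:ℤ) (d*n), Z j) - (∑ j ∈ Finset.Ioc (0:ℤ) (d*n), W j) from by
    intro X Y Z W
    rw [Finset.sum_sub_distrib, Finset.sum_sub_distrib, Finset.sum_add_distrib]]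
  -- Y part
  rw [show (∑ j ∈ Finset.Ioc (0:ℤ) (d*n),
      (((m*r % n : ℤ):ℝ)/(n:ℝ)) * (((n*(j-1)+r : ℤ):ℝ)/((d*n^2:ℤ):ℝ) - 1/2))
      = (((m*r % n : ℤ):ℝ)/(n:ℝ)) * ((r:ℝ)/(n:ℝ) - 1/2) from by
    rw [← Finset.mul_sum, S_lin d n r hd hn]]
  -- Z part
  rw [chi_sum (d*n) (d*(m*r % n)) he0 heM]
  rw [show (∑ j ∈ Finset.Ioc (d*n - d*(m*r%n)) (d*n), (((n*(j-1)+r : ℤ):ℝ)/((d*n^2:ℤ):ℝ) - 1/2))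
      = ((d*(m*r%n) : ℤ):ℝ)*((((n:ℝ)*((d:ℝ)*(n:ℝ)-(d:ℝ)*((m*r%n : ℤ):ℝ)-1)+(r:ℝ))/((d:ℝ)*(n:ℝ)^2) - 1/2))
        + ((n:ℝ)/((d:ℝ)*(n:ℝ)^2))*(((d*(m*r%n):ℤ):ℝ)*(((d*(m*r%n):ℤ):ℝ)+1)/2) from by
    rw [show Finset.Ioc (d*n - d*(m*r%n)) (d*n)
        = Finset.Ioc ((d*n - d*(m*r%n)) + 0) ((d*n - d*(m*r%n)) + d*(m*r%n)) from by
      congr 1 <;> ring]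
    rw [sum_Ioc_translate]
    rw [Finset.sum_congr rfl (show ∀ i ∈ Finset.Ioc (0:ℤ) (d*(m*r%n)),
        (((n*((d*n - d*(m*r % n)) + i-1)+r : ℤ):ℝ)/((d*n^2:ℤ):ℝ) - 1/2)
        = ((((n:ℝ)*((d:ℝ)*(n:ℝ)-(d:ℝ)*((m*r%n : ℤ):ℝ)-1)+(r:ℝ))/((d:ℝ)*(n:ℝ)^2) - 1/2)
          + ((n:ℝ)/((d:ℝ)*(n:ℝ)^2))*(i:ℝ)) from by
      intro i _; push_cast; field_simp; ring)]
    rw [sumIoc_affine _ he0]]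
  -- W part
  rw [show (∑ j ∈ Finset.Ioc (0:ℤ) (d*n), (if j = d*n ∧ r = n then (1/4:ℝ) else 0))
      = (if r = n then (1/4:ℝ) else 0) from by
    by_cases hrn : r = n
    · simp only [hrn, and_true]
      rw [Finset.sum_ite_eq' (Finset.Ioc (0:ℤ) (d*n)) (d*n) (fun _ => (1/4:ℝ))]
      have hdn : (0:ℤ) < d*n := by positivity
      simp [hdn]
    · simp [hrn]]
  -- final algebra
  have hd0 : (d:ℝ) ≠ 0 := by exact_mod_cast hd.ne'
  have hn0' : (n:ℝ) ≠ 0 := by exact_mod_cast hn0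
  generalize (∑ j ∈ Finset.Ioc (0:ℤ) (d*n), (((n*(j-1)+r : ℤ):ℝ)/((d*n^2:ℤ):ℝ) - 1/2)^2) = T
  generalize (if r = n then (1/4:ℝ) else 0) = W
  push_cast
  field_simp
  ring

lemma sumIoc_quad (L : ℤ) (h : 0 ≤ L) (A B C : ℝ) :
    ∑ i ∈ Finset.Ioc (0:ℤ) L, (A + B*(i:ℝ) + C*(i:ℝ)^2)
      = L*A + B*(L*(L+1)/2) + C*(L*(L+1)*(2*L+1)/6) := by
  rw [Finset.sum_add_distrib, sumIoc_affine L h A B]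
  rw [show (∑ i ∈ Finset.Ioc (0:ℤ) L, C*(i:ℝ)^2) = C * ∑ i ∈ Finset.Ioc (0:ℤ) L, (i:ℝ)^2 from
    (Finset.mul_sum _ _ _).symm, sumIoc_sq L h]

lemma sq_total (d n : ℤ) (hd : 0 < d) (hn : 0 < n) :
    ∑ r ∈ Finset.Ioc (0:ℤ) n, ∑ j ∈ Finset.Ioc (0:ℤ) (d*n),
        (((n*(j-1)+r : ℤ):ℝ)/((d*n^2:ℤ):ℝ) - 1/2)^2
      = ((d*n^2:ℤ):ℝ)/4 - (((d*n^2:ℤ):ℝ)+1)/2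
        + (((d*n^2:ℤ):ℝ)+1)*(2*((d*n^2:ℤ):ℝ)+1)/(6*((d*n^2:ℤ):ℝ)) := by
  rw [Finset.sum_comm]
  have hds := double_sum (fun k : ℤ => (((k:ℤ):ℝ)/((d*n^2:ℤ):ℝ) - 1/2)^2) n hn (d*n) (by positivity)
  rw [show (n*(d*n) : ℤ) = d*n^2 from by ring] at hds
  rw [← hds]
  have hN : (0:ℝ) < ((d*n^2 : ℤ):ℝ) := by push_cast; positivity
  rw [Finset.sum_congr rfl (show ∀ k ∈ Finset.Ioc (0:ℤ) (d*n^2),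
      (((k:ℤ):ℝ)/((d*n^2:ℤ):ℝ) - 1/2)^2
      = ((1/4 : ℝ) + (-(1/((d*n^2:ℤ):ℝ)))*(k:ℝ) + (1/((d*n^2:ℤ):ℝ)^2)*(k:ℝ)^2) from by
    intro k _; field_simp; ring)]
  rw [sumIoc_quad _ (by positivity)]
  field_simp
  ring

lemma ded_neg (m n : ℤ) : ded (-m) n = - ded m n := by
  unfold ded
  rw [← Finset.sum_neg_distrib]
  apply Finset.sum_congr rfl
  intro k _
  rw [show ((-m : ℤ):ℝ)*(k:ℝ)/(n:ℝ) = -((m:ℝ)*(k:ℝ)/(n:ℝ)) from by push_cast; ring, saw_neg]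
  ring

lemma main1 (d n m : ℤ) (hd : 0 < d) (hn : 0 < n) (hm : Int.gcd m n = 1) :
    ded (1 + d*n*m) (d*n^2)
      = ((d*n^2:ℤ):ℝ)/12 + 1/(6*((d:ℝ)*(n:ℝ)^2)) - (d:ℝ)*((n:ℝ)^2-1)/12 - 1/4 := by
  unfold ded
  rw [show Finset.Icc (1:ℤ) (d*n^2) = Finset.Ioc 0 (d*n^2) from by ext x; simp; omega]
  have hds := double_sum (fun k : ℤ => saw ((k:ℝ)/((d*n^2:ℤ):ℝ))
      * saw (((1+d*n*m : ℤ):ℝ)*(k:ℝ)/((d*n^2:ℤ):ℝ))) n hn (d*n) (by positivity)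
  rw [show (n*(d*n) : ℤ) = d*n^2 from by ring] at hds
  rw [show (∑ k ∈ Finset.Ioc (0:ℤ) (d*n^2), saw ((k:ℝ)/((d*n^2 : ℤ):ℝ))
        * saw (((1+d*n*m : ℤ):ℝ)*(k:ℝ)/((d*n^2:ℤ):ℝ))) =
      ∑ j ∈ Finset.Ioc (0:ℤ) (d*n), ∑ r ∈ Finset.Ioc (0:ℤ) n,
        saw (((n*(j-1)+r : ℤ):ℝ)/((d*n^2:ℤ):ℝ))
          * saw (((1+d*n*m : ℤ):ℝ)*((n*(j-1)+r : ℤ):ℝ)/((d*n^2:ℤ):ℝ)) from hds]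
  rw [Finset.sum_comm]
  rw [Finset.sum_congr rfl (show ∀ r ∈ Finset.Ioc (0:ℤ) n,
      (∑ j ∈ Finset.Ioc (0:ℤ) (d*n), saw (((n*(j-1)+r : ℤ):ℝ)/((d*n^2:ℤ):ℝ))
        * saw (((1+d*n*m : ℤ):ℝ)*((n*(j-1)+r : ℤ):ℝ)/((d*n^2:ℤ):ℝ)))
      = ((∑ j ∈ Finset.Ioc (0:ℤ) (d*n), (((n*(j-1)+r : ℤ):ℝ)/((d*n^2:ℤ):ℝ) - 1/2)^2)
        + (d:ℝ)*((m*r % n : ℤ):ℝ)^2/(2*(n:ℝ)) - (d:ℝ)*((m*r % n : ℤ):ℝ)/2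
        - (if r = n then (1/4:ℝ) else 0)) from by
    intro r hr
    simp only [Finset.mem_Ioc] at hr
    rw [Finset.sum_congr rfl (fun j hj => by
      simp only [Finset.mem_Ioc] at hj
      exact point d n m r j hd hn hr.1 hr.2 hj.1 hj.2)]
    exact dedInnerSum d n m r hd hn hr.1 hr.2)]
  rw [show ∀ X Y : ℤ → ℝ, (∑ r ∈ Finset.Ioc (0:ℤ) n,
        (X r + (d:ℝ)*((m*r % n : ℤ):ℝ)^2/(2*(n:ℝ)) - (d:ℝ)*((m*r % n : ℤ):ℝ)/2 - Y r))
      = (∑ r ∈ Finset.Ioc (0:ℤ) n, X r)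
        + (∑ r ∈ Finset.Ioc (0:ℤ) n,
            ((d:ℝ)*((m*r % n : ℤ):ℝ)^2/(2*(n:ℝ)) - (d:ℝ)*((m*r % n : ℤ):ℝ)/2))
        - (∑ r ∈ Finset.Ioc (0:ℤ) n, Y r) from by
    intro X Y
    rw [← Finset.sum_add_distrib, ← Finset.sum_sub_distrib]
    apply Finset.sum_congr rfl
    intro r _; ring]
  rw [sq_total d n hd hn]
  rw [show (∑ r ∈ Finset.Ioc (0:ℤ) n, (if r = n then (1/4:ℝ) else 0)) = 1/4 from by
    rw [Finset.sum_ite_eq' (Finset.Ioc (0:ℤ) n) n (fun _ => (1/4:ℝ))]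
    simp [hn]]
  rw [show (∑ r ∈ Finset.Ioc (0:ℤ) n,
        ((d:ℝ)*((m*r % n : ℤ):ℝ)^2/(2*(n:ℝ)) - (d:ℝ)*((m*r % n : ℤ):ℝ)/2))
      = ∑ c ∈ Finset.Ico (0:ℤ) n, ((d:ℝ)*((c:ℤ):ℝ)^2/(2*(n:ℝ)) - (d:ℝ)*((c:ℤ):ℝ)/2) from
    perm_sum n hn m hm (fun c => (d:ℝ)*((c:ℤ):ℝ)^2/(2*(n:ℝ)) - (d:ℝ)*((c:ℤ):ℝ)/2)]
  rw [show Finset.Ico (0:ℤ) n = insert (0:ℤ) (Finset.Ioc 0 (n-1)) from by ext x; simp; omega]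
  rw [Finset.sum_insert (by simp)]
  rw [Finset.sum_congr rfl (show ∀ c ∈ Finset.Ioc (0:ℤ) (n-1),
      ((d:ℝ)*((c:ℤ):ℝ)^2/(2*(n:ℝ)) - (d:ℝ)*((c:ℤ):ℝ)/2)
      = ((0:ℝ) + (-(d:ℝ)/2)*(c:ℝ) + ((d:ℝ)/(2*(n:ℝ)))*(c:ℝ)^2) from by
    intro c _; push_cast; ring)]
  rw [sumIoc_quad _ (by omega)]
  have hd0 : (d:ℝ) ≠ 0 := by exact_mod_cast hd.ne'
  have hn0 : (n:ℝ) ≠ 0 := by exact_mod_cast hn.ne'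
  push_cast
  field_simp
  ring

theorem rademacher_power (d n : ℤ) (hd : 0 < d) (hn : 0 < n) (m : ℤ)
    (hm : Int.gcd m n = 1) (ε : ℤ) (hε : ε = 1 ∨ ε = -1) :
    Sded (ε + d * n * m) (d * n ^ 2) =
      (ε : ℝ) * (2 / ((d : ℝ) * (n : ℝ) ^ 2) + (d : ℝ) - 3) := by
  have hd0 : (d:ℝ) ≠ 0 := by exact_mod_cast hd.ne'
  have hn0 : (n:ℝ) ≠ 0 := by exact_mod_cast hn.ne'
  rcases hε with rfl | rfl
  · unfold Sded
    rw [main1 d n m hd hn hm]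
    push_cast
    field_simp
    ring
  · have hm' : Int.gcd (-m) n = 1 := by rwa [Int.neg_gcd]
    unfold Sded
    rw [show (-1 + d*n*m : ℤ) = -(1 + d*n*(-m)) from by ring, ded_neg,
      main1 d n (-m) hd hn hm']
    push_cast
    field_simp
    ring
end

section
/- Let p be a prime, k and r positive integers with k/2 ≤ r ≤ k, ε ∈ {1, −1}, and m₁ = ε + p^r·m for some integer m not divisible by p. Then for an integer m₂ not divisible by p, S(m₂, p^k) = S(m₁, p^k) if and only if m₂ ≡ ε + p^r·m' (mod p^k) for some integer m' not divisible by p; and in this case S(m₁, p^k) = ε·(2/p^k + p^{2r−k} − 3). -/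
open scoped Classical
open Finset

lemma fract_zero_iff (x : ℝ) : Int.fract x = 0 ↔ ∃ z:ℤ, (z:ℝ) = x := by
  rw [Int.fract_eq_iff]
  constructor
  · rintro ⟨-,-,z,hz⟩; exact ⟨z, by linarith⟩
  · rintro ⟨z,hz⟩; exact ⟨le_refl _, by norm_num, z, by linarith⟩

lemma saw_eq_fract (x : ℝ) (h : ¬ ∃ z:ℤ, (z:ℝ) = x) : saw x = Int.fract x - 1/2 := by
  rw [saw, if_neg h, Int.fract]

lemma saw_intCast (z : ℤ) : saw (z : ℝ) = 0 := by simp [saw]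

lemma Ico_succ_int (n : ℤ) (hn : 0 ≤ n) : Ico (0:ℤ) (n+1) = insert n (Ico 0 n) := by
  ext x; simp [Finset.mem_Ico, Finset.mem_insert]; omega

lemma sum_Ico_succ_int (n : ℤ) (hn : 0 ≤ n) (f : ℤ → ℤ) :
    ∑ j ∈ Ico (0:ℤ) (n+1), f j = (∑ j ∈ Ico (0:ℤ) n, f j) + f n := by
  rw [Ico_succ_int n hn, Finset.sum_insert (by simp), add_comm]

lemma sum_id_int (n : ℤ) (hn : 0 ≤ n) : 2 * ∑ j ∈ Ico (0:ℤ) n, j = n*(n-1) := by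
  obtain ⟨N, rfl⟩ : ∃ N:ℕ, n = N := ⟨n.toNat, (Int.toNat_of_nonneg hn).symm⟩
  induction N with
  | zero => simp
  | succ N ih =>
    have : ((N+1:ℕ):ℤ) = (N:ℤ)+1 := by push_cast; ring
    rw [this, sum_Ico_succ_int _ (by positivity)]
    have := ih (by positivity)
    ring_nf; ring_nf at this; linarith

lemma sum_sq_int (n : ℤ) (hn : 0 ≤ n) : 6 * ∑ j ∈ Ico (0:ℤ) n, j^2 = n*(n-1)*(2*n-1) := by
  obtain ⟨N, rfl⟩ : ∃ N:ℕ, n = N := ⟨n.toNat, (Int.toNat_of_nonneg hn).symm⟩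
  induction N with
  | zero => simp
  | succ N ih =>
    have : ((N+1:ℕ):ℤ) = (N:ℤ)+1 := by push_cast; ring
    rw [this, sum_Ico_succ_int _ (by positivity) (fun j => j^2)]
    have := ih (by positivity)
    ring_nf; ring_nf at this; linarith

lemma emod_inv_aux (n u m : ℤ) (hn : 0 < n) (h : n ∣ u*m - 1) (j : ℤ) (hj : j ∈ Ico (0:ℤ) n) :
    (u * ((m*j) % n)) % n = j := by
  rw [Finset.mem_Ico] at hj
  have h1 : Int.ModEq n ((m*j) % n) (m*j) := Int.emod_emod_of_dvd (m*j) dvd_rfl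
  have h2 : Int.ModEq n (u*(m*j)) j := by
    apply Int.modEq_iff_dvd.mpr
    obtain ⟨c, hc⟩ := h
    exact ⟨-(c*j), by linear_combination (-j) * hc⟩
  have h3 : Int.ModEq n (u * ((m*j)%n)) j := (h1.mul_left u).trans h2
  rw [Int.ModEq] at h3
  rw [h3, Int.emod_eq_of_lt hj.1 hj.2]

lemma sum_emod_perm (n m : ℤ) (hn : 0 < n) (hcop : IsCoprime m n) (g : ℤ → ℤ) :
    ∑ j ∈ Ico (0:ℤ) n, g ((m*j) % n) = ∑ j ∈ Ico (0:ℤ) n, g j := by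
  obtain ⟨u, v, huv⟩ := hcop
  have hum : n ∣ u*m - 1 := ⟨-v, by linarith⟩
  have hmu : n ∣ m*u - 1 := ⟨-v, by linarith⟩
  apply Finset.sum_bij' (fun j _ => (m*j) % n) (fun j _ => (u*j) % n)
  · intro a ha
    rw [Finset.mem_Ico]
    exact ⟨Int.emod_nonneg _ (by omega), Int.emod_lt_of_pos _ hn⟩
  · intro a ha
    rw [Finset.mem_Ico]
    exact ⟨Int.emod_nonneg _ (by omega), Int.emod_lt_of_pos _ hn⟩
  · intro a ha; exact emod_inv_aux n u m hn hum a ha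
  · intro a ha; exact emod_inv_aux n m u hn hmu a ha
  · intro a ha; rfl

/-- `saw` at a rational j/n with 1 ≤ j < n. -/
lemma saw_frac (n j : ℤ) (h1 : 1 ≤ j) (h2 : j < n) : saw ((j:ℝ)/n) = (j:ℝ)/n - 1/2 := by
  have hn : (0:ℝ) < n := by
    have : (0:ℤ) < n := by omega
    exact_mod_cast this
  have hnint : ¬ ∃ z : ℤ, (z:ℝ) = (j:ℝ)/n := by
    rintro ⟨z, hz⟩
    have hzn : (z:ℝ) * n = j := by field_simp at hz; linarith [hz]
    have hz' : z * n = j := by exact_mod_cast hzn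
    have hn' : 0 < n := by exact_mod_cast hn
    rcases le_or_gt z 0 with h | h
    · nlinarith [mul_nonpos_of_nonpos_of_nonneg h (le_of_lt hn')]
    · have : 1 ≤ z := h
      nlinarith
  rw [saw, if_neg hnint]
  have hfl : ⌊(j:ℝ)/n⌋ = 0 := by
    apply Int.floor_eq_zero_iff.mpr
    constructor
    · positivity
    · rw [div_lt_one hn]; exact_mod_cast h2
  rw [hfl]; push_cast; ring

lemma key_formula (m n : ℤ) (hn : 0 < n) (hcop : IsCoprime m n) :
    (n:ℝ)^2 * Sded m n
      = 12 * ((∑ j ∈ Ico (0:ℤ) n, j * ((m*j) % n) : ℤ) : ℝ) - 3*(n:ℝ)^2*((n:ℝ)-1) := by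
  have hnR : (0:ℝ) < n := by exact_mod_cast hn
  -- the j = n term of ded vanishes
  have hIcc : Icc (1:ℤ) n = insert n (Ico 1 n) := by
    ext x; simp [Finset.mem_Icc, Finset.mem_Ico, Finset.mem_insert]; omega
  have hterm_n : saw ((n:ℝ)/n) * saw ((m:ℝ)*n/n) = 0 := by
    have h1 : (n:ℝ)/n = ((1:ℤ):ℝ) := by push_cast; field_simp
    rw [h1, saw_intCast]; ring
  -- pointwise identity on Ico 1 n
  have hpt : ∀ j ∈ Ico (1:ℤ) n, saw ((j:ℝ)/n) * saw ((m:ℝ)*j/n)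
      = ((j:ℝ)/n - 1/2) * ((((m*j)%n : ℤ):ℝ)/n - 1/2) := by
    intro j hj
    rw [Finset.mem_Ico] at hj
    have hR0 : (0:ℤ) ≤ (m*j)%n := Int.emod_nonneg _ (by omega)
    have hRn : (m*j)%n < n := Int.emod_lt_of_pos _ hn
    have hR1 : 1 ≤ (m*j)%n := by
      rcases eq_or_lt_of_le hR0 with h | h
      · exfalso
        have hdvd : n ∣ m*j := Int.dvd_of_emod_eq_zero h.symm
        have : n ∣ j := (hcop.symm).dvd_of_dvd_mul_left hdvd
        have := Int.le_of_dvd (by omega) this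
        omega
      · omega
    have hmjn : (m:ℝ)*j/n = (((m*j)%n : ℤ):ℝ)/n + ((m*j)/n : ℤ) := by
      have := Int.mul_ediv_add_emod (m*j) n
      have hcast : ((m*j : ℤ):ℝ) = (n:ℝ) * ((m*j)/n : ℤ) + (((m*j)%n : ℤ):ℝ) := by
        exact_mod_cast congrArg (fun z : ℤ => (z:ℝ)) this.symm
      push_cast at hcast ⊢
      field_simp
      linarith [hcast]
    rw [hmjn, saw_add_int, saw_frac n j hj.1 hj.2, saw_frac n _ hR1 hRn]
  rw [Sded, ded, hIcc, Finset.sum_insert (by simp), hterm_n, zero_add,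
    Finset.sum_congr rfl hpt]
  -- add back the j = 0 term
  have hIco : Ico (0:ℤ) n = insert 0 (Ico 1 n) := by
    ext x; simp [Finset.mem_Ico, Finset.mem_insert]; omega
  have hzero : (((0:ℝ))/n - 1/2) * ((((m*0)%n : ℤ):ℝ)/n - 1/2) = 1/4 := by
    norm_num
  have hsum01 : ∑ j ∈ Ico (1:ℤ) n, ((j:ℝ)/n - 1/2) * ((((m*j)%n : ℤ):ℝ)/n - 1/2)
      = (∑ j ∈ Ico (0:ℤ) n, ((j:ℝ)/n - 1/2) * ((((m*j)%n : ℤ):ℝ)/n - 1/2)) - 1/4 := by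
    rw [hIco, Finset.sum_insert (by simp)]
    push_cast
    rw [show ((0:ℝ))/n - 1/2 = -(1/2) by norm_num]
    norm_num
  rw [hsum01]
  -- expand the product
  have hexp : ∀ j ∈ Ico (0:ℤ) n, ((j:ℝ)/n - 1/2) * ((((m*j)%n : ℤ):ℝ)/n - 1/2)
      = ((j * ((m*j)%n) : ℤ):ℝ)/(n:ℝ)^2 - (1/(2*n))*(j:ℝ) - (1/(2*n))*(((m*j)%n : ℤ):ℝ) + 1/4 := by
    intro j _
    push_cast
    field_simp
    ring
  rw [Finset.sum_congr rfl hexp]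
  rw [Finset.sum_add_distrib, Finset.sum_sub_distrib, Finset.sum_sub_distrib,
    ← Finset.mul_sum, ← Finset.mul_sum, Finset.sum_const, ← Finset.sum_div]
  have hcard : ((Ico (0:ℤ) n).card : ℝ) = (n:ℝ) := by
    rw [Int.card_Ico, sub_zero]
    exact_mod_cast congrArg (fun z:ℤ => (z:ℝ)) (Int.toNat_of_nonneg hn.le)
  have hcast1 : ∑ j ∈ Ico (0:ℤ) n, ((j * ((m*j)%n) : ℤ):ℝ)
      = ((∑ j ∈ Ico (0:ℤ) n, j * ((m*j)%n) : ℤ):ℝ) := by push_cast; ring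
  have hcast2 : ∑ j ∈ Ico (0:ℤ) n, ((j:ℤ):ℝ) = ((∑ j ∈ Ico (0:ℤ) n, j : ℤ):ℝ) := by
    push_cast; ring
  have hcast3 : ∑ j ∈ Ico (0:ℤ) n, (((m*j)%n : ℤ):ℝ) = ((∑ j ∈ Ico (0:ℤ) n, j : ℤ):ℝ) := by
    have hperm := sum_emod_perm n m hn hcop id
    simp only [id] at hperm
    have hA : ∑ j ∈ Ico (0:ℤ) n, (((m*j)%n : ℤ):ℝ) = ((∑ j ∈ Ico (0:ℤ) n, (m*j)%n : ℤ):ℝ) := by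
      push_cast; ring
    rw [hA, hperm]
  have hsid : ((∑ j ∈ Ico (0:ℤ) n, j : ℤ):ℝ) = ((n:ℝ)*((n:ℝ)-1))/2 := by
    have h2 := sum_id_int n hn.le
    have h3 : ((2 * ∑ j ∈ Ico (0:ℤ) n, j : ℤ):ℝ) = ((n*(n-1) : ℤ):ℝ) :=
      congrArg (fun z:ℤ => (z:ℝ)) h2
    push_cast at h3
    linarith
  rw [hcast1, hcast2, hcast3, hsid, nsmul_eq_mul, hcard]
  field_simp
  ring

lemma Sded_congr (m m' n : ℤ) (hn : n ≠ 0) (h : n ∣ m - m') : Sded m n = Sded m' n := by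
  obtain ⟨c, hc⟩ := h
  unfold Sded ded
  congr 1
  apply Finset.sum_congr rfl
  intro j _
  congr 1
  have hm : m = m' + n * c := by linarith
  have : (m:ℝ) * j / n = (m':ℝ)*j/n + ((c*j : ℤ):ℝ) := by
    subst hm
    have hnR : (n:ℝ) ≠ 0 := Int.cast_ne_zero.mpr hn
    push_cast
    field_simp
  rw [this, saw_add_int]

lemma Sded_neg (m n : ℤ) : Sded (-m) n = - Sded m n := by
  unfold Sded ded
  have : ∀ j ∈ Icc (1:ℤ) n, saw ((j:ℝ)/n) * saw (((-m:ℤ) : ℝ) * j / n)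
      = -(saw ((j:ℝ)/n) * saw ((m:ℝ)*j/n)) := by
    intro j _
    have h1 : ((-m : ℤ):ℝ) * j / n = -((m:ℝ)*j/n) := by push_cast; ring
    rw [h1, saw_neg]
    ring
  rw [Finset.sum_congr rfl this, Finset.sum_neg_distrib]
  ring

lemma cong_lemma (m n u c : ℤ) (hn : 0 < n) (hu : m*u - 1 = n*c) (hcop : IsCoprime m n) :
    (n^2 : ℤ) ∣ 12 * (∑ j ∈ Ico (0:ℤ) n, j * ((m*j)%n)) - n * (m + u) := by
  set A := ∑ j ∈ Ico (0:ℤ) n, j * ((m*j)%n) with hA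
  set S2 := ∑ j ∈ Ico (0:ℤ) n, j^2 with hS2
  have hperm : ∑ j ∈ Ico (0:ℤ) n, ((m*j)%n)^2 = S2 :=
    sum_emod_perm n m hn hcop (fun x => x^2)
  have e1 : ∑ j ∈ Ico (0:ℤ) n, (m*j - (m*j)%n)^2
      = m^2*S2 - 2*m*A + ∑ j ∈ Ico (0:ℤ) n, ((m*j)%n)^2 := by
    rw [Finset.sum_congr rfl (fun j _ => by ring :
      ∀ j ∈ Ico (0:ℤ) n, (m*j - (m*j)%n)^2 = m^2*j^2 - 2*m*(j*((m*j)%n)) + ((m*j)%n)^2)]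
    rw [Finset.sum_add_distrib, Finset.sum_sub_distrib, ← Finset.mul_sum, ← Finset.mul_sum]
  have hdvd : (n^2 : ℤ) ∣ ∑ j ∈ Ico (0:ℤ) n, (m*j - (m*j)%n)^2 := by
    apply Finset.dvd_sum
    intro j _
    have : m*j - (m*j)%n = n * ((m*j)/n) := by
      rw [Int.emod_def]; ring
    rw [this]
    exact ⟨((m*j)/n)^2, by ring⟩
  rw [e1, hperm] at hdvd
  obtain ⟨Y, hY⟩ : (n^2:ℤ) ∣ (m^2+1)*S2 - 2*m*A := by
    obtain ⟨Y, hY⟩ := hdvd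
    exact ⟨Y, by linarith⟩
  have h6 : 6*S2 = n*(n-1)*(2*n-1) := sum_sq_int n hn.le
  have key : m * (12*A - n*(m+u)) = n^2 * ((m^2+1)*(2*n-3) - 6*Y - c) := by
    linear_combination (-6)*hY + (m^2+1)*h6 - n*hu
  have hmul : (n^2:ℤ) ∣ m * (12*A - n*(m+u)) := ⟨_, key⟩
  exact (hcop.symm.pow_left).dvd_of_dvd_mul_left hmul

lemma card_Ico_int (a : ℤ) (ha : 0 ≤ a) : (((Ico (0:ℤ) a).card : ℤ)) = a := by
  rw [Int.card_Ico, sub_zero, Int.toNat_of_nonneg ha]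

lemma sum_const_Ico (x v : ℤ) (hx : 0 ≤ x) : ∑ _t ∈ Ico (0:ℤ) x, v = x * v := by
  rw [Finset.sum_const, nsmul_eq_mul]
  rw [show ((Ico (0:ℤ) x).card : ℤ) = x from card_Ico_int x hx]

lemma sum_linear (x α β : ℤ) (hx : 0 ≤ x) :
    ∑ t ∈ Ico (0:ℤ) x, (α + β*t) = α*x + β*(∑ t ∈ Ico (0:ℤ) x, t) := by
  rw [Finset.sum_add_distrib, ← Finset.mul_sum, sum_const_Ico x α hx, mul_comm α x]

lemma sum_poly2 (x α β γ : ℤ) (hx : 0 ≤ x) :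
    ∑ t ∈ Ico (0:ℤ) x, (α + β*t + γ*t^2)
      = α*x + β*(∑ t ∈ Ico (0:ℤ) x, t) + γ*(∑ t ∈ Ico (0:ℤ) x, t^2) := by
  rw [Finset.sum_add_distrib, Finset.sum_add_distrib, ← Finset.mul_sum, ← Finset.mul_sum,
    sum_const_Ico x α hx, mul_comm α x]

lemma sum_grid (d d' : ℤ) (hd : 0 < d) (hd' : 0 < d') (F : ℤ → ℤ) :
    ∑ j ∈ Ico (0:ℤ) (d*d'), F j = ∑ c ∈ Ico (0:ℤ) d, ∑ t ∈ Ico (0:ℤ) d', F (c + d*t) := by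
  rw [← Finset.sum_product']
  apply Finset.sum_bij' (fun (j : ℤ) (_ : j ∈ Ico (0:ℤ) (d*d')) => ((j % d, j / d) : ℤ × ℤ))
    (fun (p : ℤ × ℤ) (_ : p ∈ (Ico (0:ℤ) d) ×ˢ (Ico (0:ℤ) d')) => p.1 + d * p.2)
  · intro j hj
    rw [Finset.mem_Ico] at hj
    rw [Finset.mem_product, Finset.mem_Ico, Finset.mem_Ico]
    refine ⟨⟨Int.emod_nonneg _ (by omega), Int.emod_lt_of_pos _ hd⟩,
      Int.ediv_nonneg hj.1 hd.le, ?_⟩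
    rw [Int.ediv_lt_iff_lt_mul hd]
    calc j < d * d' := hj.2
    _ = d' * d := by ring
  · intro p hp
    rw [Finset.mem_product, Finset.mem_Ico, Finset.mem_Ico] at hp
    rw [Finset.mem_Ico]
    obtain ⟨⟨h1, h2⟩, h3, h4⟩ := hp
    constructor
    · nlinarith
    · nlinarith
  · intro j _
    exact Int.emod_add_mul_ediv j d
  · intro p hp
    rw [Finset.mem_product, Finset.mem_Ico, Finset.mem_Ico] at hp
    have h1 : (p.1 + d * p.2) % d = p.1 := by
      rw [Int.add_mul_emod_self_left, Int.emod_eq_of_lt hp.1.1 hp.1.2]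
    have h2 : (p.1 + d * p.2) / d = p.2 := by
      rw [Int.add_mul_ediv_left _ _ (by omega : d ≠ 0), Int.ediv_eq_zero_of_lt hp.1.1 hp.1.2]
      ring
    rw [Prod.ext_iff]
    exact ⟨h1, h2⟩
  · intro j _
    rw [Int.emod_add_mul_ediv j d]

lemma sum_Ico_consec_int (f : ℤ → ℤ) (a b c : ℤ) (h1 : a ≤ b) (h2 : b ≤ c) :
    ∑ i ∈ Ico a b, f i + ∑ i ∈ Ico b c, f i = ∑ i ∈ Ico a c, f i := by
  rw [← Finset.sum_union (Finset.Ico_disjoint_Ico_consecutive a b c),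
    Finset.Ico_union_Ico_eq_Ico h1 h2]

lemma sum_poly_emod (d m' A0 A1 A2 A3 A4 : ℤ) (hd : 0 < d) (hcop : IsCoprime m' d) :
    ∑ c ∈ Ico (0:ℤ) d, (A0 + A1*((m'*c)%d) + A2*((m'*c)%d)^2 + A3*c + A4*c^2)
      = d*A0 + (A1+A3)*(∑ c ∈ Ico (0:ℤ) d, c) + (A2+A4)*(∑ c ∈ Ico (0:ℤ) d, c^2) := by
  rw [Finset.sum_add_distrib, Finset.sum_add_distrib, Finset.sum_add_distrib,
    Finset.sum_add_distrib, ← Finset.mul_sum, ← Finset.mul_sum, ← Finset.mul_sum,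
    ← Finset.mul_sum, sum_const_Ico d A0 hd.le,
    sum_emod_perm d m' hd hcop (fun x => x),
    sum_emod_perm d m' hd hcop (fun x => x^2)]
  ring

lemma Aint_special (d q m' : ℤ) (hd : 0 < d) (hq : 0 < q) (hcop : IsCoprime m' d) :
    12 * (∑ j ∈ Ico (0:ℤ) (d*(d*q)), j * (((1 + (d*q)*m') * j) % (d*(d*q))))
      = (d*(d*q)) * ((d*q)^2 + 2 + 3*(d*(d*q))^2 - 6*(d*(d*q))) := by
  have hdq : (0:ℤ) < d*q := by positivity
  have hn0 : (0:ℤ) < d*(d*q) := by positivity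
  -- pointwise description of the residue
  have hpt : ∀ j ∈ Ico (0:ℤ) (d*(d*q)),
      ((1 + (d*q)*m') * j) % (d*(d*q))
        = j + (d*q)*((m'*j)%d) - (if j + (d*q)*((m'*j)%d) < d*(d*q) then 0 else d*(d*q)) := by
    intro j hj
    rw [Finset.mem_Ico] at hj
    have hE0 : 0 ≤ (m'*j)%d := Int.emod_nonneg _ (by omega)
    have hEd : (m'*j)%d < d := Int.emod_lt_of_pos _ hd
    have hub : (d*q)*((m'*j)%d) ≤ (d*q)*(d-1) := by
      apply mul_le_mul_of_nonneg_left (by omega) hdq.le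
    have hdvd : (d:ℤ) ∣ m'*j - (m'*j)%d := ⟨(m'*j)/d, by rw [Int.emod_def]; ring⟩
    obtain ⟨w, hw⟩ := hdvd
    set R := j + (d*q)*((m'*j)%d) - (if j + (d*q)*((m'*j)%d) < d*(d*q) then 0 else d*(d*q)) with hR
    have hXnn : 0 ≤ (d*q)*((m'*j)%d) := mul_nonneg hdq.le hE0
    have hR0 : 0 ≤ R := by
      rw [hR]; split_ifs with h
      · linarith [hj.1]
      · push_neg at h; linarith
    have hRlt : R < d*(d*q) := by
      rw [hR]; split_ifs with h
      · linarith
      · nlinarith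
    have hch : Int.ModEq (d*(d*q)) ((1 + (d*q)*m') * j) R := by
      apply Int.modEq_iff_dvd.mpr
      rw [hR]; split_ifs with h
      · exact ⟨-w, by linear_combination (-(d*q))*hw⟩
      · exact ⟨-w - 1, by linear_combination (-(d*q))*hw⟩
    rw [Int.ModEq] at hch
    rw [hch, Int.emod_eq_of_lt hR0 hRlt]
  rw [Finset.sum_congr rfl (fun j hj => by rw [hpt j hj])]
  rw [sum_grid d (d*q) hd hdq
    (fun j => j * (j + (d*q)*((m'*j)%d) - (if j + (d*q)*((m'*j)%d) < d*(d*q) then 0 else d*(d*q))))]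
  -- name the four standard sums
  set S1 := ∑ t ∈ Ico (0:ℤ) (d*q), t with hS1def
  set Q1 := ∑ t ∈ Ico (0:ℤ) (d*q), t^2 with hQ1def
  set Sd := ∑ c ∈ Ico (0:ℤ) d, c with hSddef
  set Qd := ∑ c ∈ Ico (0:ℤ) d, c^2 with hQddef
  have hS1 : 2*S1 = (d*q)*((d*q)-1) := sum_id_int _ hdq.le
  have hQ1 : 6*Q1 = (d*q)*((d*q)-1)*(2*(d*q)-1) := sum_sq_int _ hdq.le
  have hSd : 2*Sd = d*(d-1) := sum_id_int _ hd.le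
  have hQd : 6*Qd = d*(d-1)*(2*d-1) := sum_sq_int _ hd.le
  -- the inner sums
  have hinner : ∀ c ∈ Ico (0:ℤ) d,
      2 * (∑ t ∈ Ico (0:ℤ) (d*q), (fun j => j * (j + (d*q)*((m'*j)%d)
            - (if j + (d*q)*((m'*j)%d) < d*(d*q) then 0 else d*(d*q)))) (c + d*t))
      = (2*d^2*Q1 - 2*(d*(d*q))*d*S1 + (d*(d*q))*d*((d*q)^2-(d*q)))
        + (2*d*(d*q)*S1 - (d*(d*q))*d*(2*(d*q)-1)*q) * ((m'*c)%d)
        + ((d*(d*q))*d*q^2) * ((m'*c)%d)^2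
        + (4*d*S1) * c + (2*(d*q)) * c^2 := by
    intro c hc
    rw [Finset.mem_Ico] at hc
    set E := (m'*c)%d with hEdef
    have hE0 : 0 ≤ E := Int.emod_nonneg _ (by omega)
    have hEd : E < d := Int.emod_lt_of_pos _ hd
    have ha0 : 0 ≤ d*q - q*E := by nlinarith
    have had : d*q - q*E ≤ d*q := by nlinarith
    have hFt : ∀ t ∈ Ico (0:ℤ) (d*q),
        (c + d*t) * ((c + d*t) + (d*q)*((m'*(c + d*t))%d)
            - (if (c + d*t) + (d*q)*((m'*(c + d*t))%d) < d*(d*q) then 0 else d*(d*q)))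
        = ((c^2 + (d*q)*E*c) + (2*c*d + d*(d*q)*E)*t + d^2*t^2)
          - (if t < d*q - q*E then 0 else (d*(d*q))*(c+d*t)) := by
      intro t ht
      rw [Finset.mem_Ico] at ht
      have he : (m'*(c + d*t))%d = E := by
        rw [show m'*(c+d*t) = m'*c + d*(m'*t) by ring, Int.add_mul_emod_self_left, hEdef]
      rw [he]
      have hcond : ((c + d*t) + (d*q)*E < d*(d*q)) ↔ (t < d*q - q*E) := by
        constructor
        · intro h
          by_contra hcon
          push_neg at hcon
          nlinarith
        · intro h
          nlinarith
      rw [if_congr hcond rfl rfl, mul_sub, mul_ite, mul_zero]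
      split_ifs with h
      · ring
      · ring
    rw [Finset.sum_congr rfl hFt, Finset.sum_sub_distrib]
    -- first sum
    rw [sum_poly2 (d*q) (c^2 + (d*q)*E*c) (2*c*d + d*(d*q)*E) (d^2) hdq.le]
    -- second sum
    have hswap : ∀ t : ℤ, (if t < d*q - q*E then (0:ℤ) else (d*(d*q))*(c+d*t))
        = (if d*q - q*E ≤ t then (d*(d*q))*(c+d*t) else 0) := by
      intro t
      by_cases h : t < d*q - q*E
      · rw [if_pos h, if_neg (not_le.mpr h)]
      · rw [if_neg h, if_pos (not_lt.mp h)]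
    rw [Finset.sum_congr rfl (fun t _ => hswap t), ← Finset.sum_filter]
    have hfil : (Ico (0:ℤ) (d*q)).filter (fun t => d*q - q*E ≤ t) = Ico (d*q - q*E) (d*q) := by
      ext x
      rw [Finset.mem_filter, Finset.mem_Ico, Finset.mem_Ico]
      constructor
      · rintro ⟨⟨-, h2⟩, h3⟩; exact ⟨h3, h2⟩
      · rintro ⟨h1, h2⟩; exact ⟨⟨le_trans ha0 h1, h2⟩, h1⟩
    rw [hfil]
    have hsplit := sum_Ico_consec_int (fun t => (d*(d*q))*(c+d*t)) 0 (d*q - q*E) (d*q) ha0 had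
    have hIA : ∑ t ∈ Ico (0:ℤ) (d*q - q*E), (d*(d*q))*(c+d*t)
        = ((d*(d*q))*c)*(d*q - q*E) + ((d*(d*q))*d)*(∑ t ∈ Ico (0:ℤ) (d*q - q*E), t) := by
      rw [Finset.sum_congr rfl (fun t _ => by ring :
        ∀ t ∈ Ico (0:ℤ) (d*q - q*E), (d*(d*q))*(c+d*t) = (d*(d*q))*c + ((d*(d*q))*d)*t)]
      exact sum_linear _ _ _ ha0
    have hIB : ∑ t ∈ Ico (0:ℤ) (d*q), (d*(d*q))*(c+d*t)
        = ((d*(d*q))*c)*(d*q) + ((d*(d*q))*d)*S1 := by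
      rw [Finset.sum_congr rfl (fun t _ => by ring :
        ∀ t ∈ Ico (0:ℤ) (d*q), (d*(d*q))*(c+d*t) = (d*(d*q))*c + ((d*(d*q))*d)*t)]
      exact sum_linear _ _ _ hdq.le
    have hSa : 2*(∑ t ∈ Ico (0:ℤ) (d*q - q*E), t) = (d*q - q*E)*((d*q - q*E)-1) :=
      sum_id_int _ ha0
    have hIcoSum : ∑ t ∈ Ico (d*q - q*E) (d*q), (d*(d*q))*(c+d*t)
        = (((d*(d*q))*c)*(d*q) + ((d*(d*q))*d)*S1)
          - (((d*(d*q))*c)*(d*q - q*E) + ((d*(d*q))*d)*(∑ t ∈ Ico (0:ℤ) (d*q - q*E), t)) := by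
      rw [← hIA, ← hIB, ← hsplit]; ring
    rw [hIcoSum]
    linear_combination ((d*(d*q))*d)*hSa
  have h2A : 2 * (∑ c ∈ Ico (0:ℤ) d, ∑ t ∈ Ico (0:ℤ) (d*q),
        (fun j => j * (j + (d*q)*((m'*j)%d)
          - (if j + (d*q)*((m'*j)%d) < d*(d*q) then 0 else d*(d*q)))) (c + d*t))
      = ∑ c ∈ Ico (0:ℤ) d, ((2*d^2*Q1 - 2*(d*(d*q))*d*S1 + (d*(d*q))*d*((d*q)^2-(d*q)))
        + (2*d*(d*q)*S1 - (d*(d*q))*d*(2*(d*q)-1)*q) * ((m'*c)%d)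
        + ((d*(d*q))*d*q^2) * ((m'*c)%d)^2
        + (4*d*S1) * c + (2*(d*q)) * c^2) := by
    rw [Finset.mul_sum]
    exact Finset.sum_congr rfl hinner
  rw [sum_poly_emod d m' _ _ _ _ _ hd hcop] at h2A
  calc 12 * (∑ c ∈ Ico (0:ℤ) d, ∑ t ∈ Ico (0:ℤ) (d*q),
        (fun j => j * (j + (d*q)*((m'*j)%d)
          - (if j + (d*q)*((m'*j)%d) < d*(d*q) then 0 else d*(d*q)))) (c + d*t))
      = 6 * (2 * (∑ c ∈ Ico (0:ℤ) d, ∑ t ∈ Ico (0:ℤ) (d*q),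
        (fun j => j * (j + (d*q)*((m'*j)%d)
          - (if j + (d*q)*((m'*j)%d) < d*(d*q) then 0 else d*(d*q)))) (c + d*t))) := by ring
    _ = (d*(d*q)) * ((d*q)^2 + 2 + 3*(d*(d*q))^2 - 6*(d*(d*q))) := by
        rw [h2A]
        linear_combination (2*d^3)*hQ1 + (12*d*Sd + 6*d^2*q*Sd - 6*d^4*q)*hS1
          + (2*d*q + d^3*q^3)*hQd + (-6*d^2*q + 6*d^3*q^2 - 3*d^4*q^3)*hSd

lemma coprime_pk (p : ℕ) (hp : p.Prime) (m : ℤ) (h : ¬ (p:ℤ) ∣ m) (k:ℕ) :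
    IsCoprime m ((p:ℤ)^k) := by
  have hprime : Prime (p:ℤ) := Nat.prime_iff_prime_int.mp hp
  exact ((hprime.coprime_iff_not_dvd).mpr h).symm.pow_right

lemma value_one (p : ℕ) (hp : p.Prime) (a k : ℕ) (ha : 0 < a) (hak : a ≤ k) (hka : k ≤ 2*a)
    (m' : ℤ) (hm' : ¬ (p:ℤ) ∣ m') :
    Sded (1 + (p:ℤ)^a * m') ((p:ℤ)^k)
      = 2/(p:ℝ)^k + (p:ℝ)^(2*a-k) - 3 := by
  have hp2 : 2 ≤ p := hp.two_le
  have hd : (0:ℤ) < (p:ℤ)^(k-a) := by positivity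
  have hq : (0:ℤ) < (p:ℤ)^(2*a-k) := by positivity
  have hdq : ((p:ℤ)^(k-a)) * ((p:ℤ)^(2*a-k)) = (p:ℤ)^a := by
    rw [← pow_add]; congr 1; omega
  have hnn : ((p:ℤ)^(k-a)) * ((p:ℤ)^a) = (p:ℤ)^k := by
    rw [← pow_add]; congr 1; omega
  have hcop : IsCoprime m' ((p:ℤ)^(k-a)) := coprime_pk p hp m' hm' _
  have hA := Aint_special ((p:ℤ)^(k-a)) ((p:ℤ)^(2*a-k)) m' hd hq hcop
  rw [hdq, hnn] at hA
  have hmcop : IsCoprime (1 + (p:ℤ)^a * m') ((p:ℤ)^k) := by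
    apply coprime_pk p hp _ _ k
    intro hdvd
    have h1 : (p:ℤ) ∣ (p:ℤ)^a * m' := by
      apply Dvd.dvd.mul_right
      exact dvd_pow_self _ (by omega)
    have : (p:ℤ) ∣ 1 := by
      have := dvd_sub hdvd h1
      simpa using this
    have := Int.le_of_dvd one_pos this
    have : (p:ℤ) ≥ 2 := by exact_mod_cast hp2
    omega
  have hk0 : (0:ℤ) < (p:ℤ)^k := by positivity
  have hKF := key_formula (1 + (p:ℤ)^a * m') ((p:ℤ)^k) hk0 hmcop
  -- cast hA to ℝ
  have hAR : 12 * ((∑ j ∈ Ico (0:ℤ) ((p:ℤ)^k), j * (((1 + (p:ℤ)^a * m')*j) % ((p:ℤ)^k)) : ℤ) : ℝ)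
      = (p:ℝ)^k * ((p:ℝ)^a*(p:ℝ)^a + 2 + 3*((p:ℝ)^k)^2 - 6*(p:ℝ)^k) := by
    have := congrArg (fun z : ℤ => (z:ℝ)) hA
    push_cast at this ⊢
    convert this using 2 <;> push_cast <;> ring
  rw [hAR] at hKF
  push_cast at hKF
  have hpkR : (0:ℝ) < (p:ℝ)^k := by positivity
  have hsub : (p:ℝ)^(2*a-k) = (p:ℝ)^a*(p:ℝ)^a/(p:ℝ)^k := by
    rw [eq_div_iff (ne_of_gt hpkR), ← pow_add, ← pow_add]
    congr 1; omega
  rw [hsub]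
  have hgoal : Sded (1 + (p:ℤ)^a * m') ((p:ℤ)^k) * ((p:ℝ)^k)^2
      = (2/(p:ℝ)^k + (p:ℝ)^a*(p:ℝ)^a/(p:ℝ)^k - 3) * ((p:ℝ)^k)^2 := by
    rw [show (2/(p:ℝ)^k + (p:ℝ)^a*(p:ℝ)^a/(p:ℝ)^k - 3) * ((p:ℝ)^k)^2
      = 2*(p:ℝ)^k + (p:ℝ)^a*(p:ℝ)^a*(p:ℝ)^k - 3*((p:ℝ)^k)^2 by field_simp]
    linear_combination hKF
  exact mul_right_cancel₀ (by positivity : ((p:ℝ)^k)^2 ≠ 0) hgoal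

lemma value_eps (p : ℕ) (hp : p.Prime) (a k : ℕ) (ha : 0 < a) (hak : a ≤ k) (hka : k ≤ 2*a)
    (ε : ℤ) (hε : ε = 1 ∨ ε = -1) (m' : ℤ) (hm' : ¬ (p:ℤ) ∣ m') (m₂ : ℤ)
    (h : (p:ℤ)^k ∣ m₂ - (ε + (p:ℤ)^a * m')) :
    Sded m₂ ((p:ℤ)^k) = (ε:ℝ) * (2/(p:ℝ)^k + (p:ℝ)^(2*a-k) - 3) := by
  have hne : ((p:ℤ)^k) ≠ 0 := by
    have : 0 < (p:ℤ) := by exact_mod_cast hp.pos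
    positivity
  rw [Sded_congr m₂ (ε + (p:ℤ)^a * m') _ hne h]
  rcases hε with rfl | rfl
  · rw [show (1:ℤ) + (p:ℤ)^a * m' = 1 + (p:ℤ)^a * m' from rfl]
    rw [value_one p hp a k ha hak hka m' hm']
    push_cast; ring
  · rw [show (-1:ℤ) + (p:ℤ)^a * m' = -(1 + (p:ℤ)^a * (-m')) by ring]
    rw [Sded_neg, value_one p hp a k ha hak hka (-m') (by simpa using hm')]
    push_cast; ring

theorem prime_power_equal_dedekind_sums (p : ℕ) (hp : p.Prime) (k r : ℕ)
    (hk : 0 < k) (hr : 0 < r) (hkr : k ≤ 2 * r) (hrk : r ≤ k)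
    (ε : ℤ) (hε : ε = 1 ∨ ε = -1) (m : ℤ) (hm : ¬ (p : ℤ) ∣ m)
    (m₁ : ℤ) (hm₁ : m₁ = ε + (p : ℤ) ^ r * m)
    (m₂ : ℤ) (hm₂ : ¬ (p : ℤ) ∣ m₂) :
    (Sded m₂ ((p : ℤ) ^ k) = Sded m₁ ((p : ℤ) ^ k) ↔
      ∃ m' : ℤ, ¬ (p : ℤ) ∣ m' ∧ m₂ ≡ ε + (p : ℤ) ^ r * m' [ZMOD (p : ℤ) ^ k]) ∧
    Sded m₁ ((p : ℤ) ^ k) =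
      (ε : ℝ) * (2 / (p : ℝ) ^ k + (p : ℝ) ^ (2 * (r : ℤ) - (k : ℤ)) - 3) := by
  have hp2 : 2 ≤ p := hp.two_le
  have hppos : (0:ℤ) < (p:ℤ) := by exact_mod_cast hp.pos
  have hn0 : (0:ℤ) < (p:ℤ)^k := by positivity
  have hpkR : (0:ℝ) < (p:ℝ)^k := by
    have : (0:ℝ) < (p:ℝ) := by exact_mod_cast hp.pos
    positivity
  have hzpow : (p:ℝ)^(2*(r:ℤ)-(k:ℤ)) = (p:ℝ)^(2*r-k : ℕ) := by
    rw [show 2*(r:ℤ)-(k:ℤ) = ((2*r-k : ℕ) : ℤ) by omega, zpow_natCast]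
  have hval1 : Sded m₁ ((p:ℤ)^k) = (ε:ℝ) * (2/(p:ℝ)^k + (p:ℝ)^(2*r-k:ℕ) - 3) :=
    value_eps p hp r k hr hrk hkr ε hε m hm m₁ ⟨0, by rw [hm₁]; ring⟩
  have hεε : ε*ε = 1 := by rcases hε with rfl | rfl <;> norm_num
  have hone : ¬ (p:ℤ) ∣ 1 := by
    intro hd
    have := Int.le_of_dvd one_pos hd
    omega
  constructor
  · constructor
    · -- hard direction
      intro heq
      have hSval : Sded m₂ ((p:ℤ)^k) = (ε:ℝ) * (2/(p:ℝ)^k + (p:ℝ)^(2*r-k:ℕ) - 3) :=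
        heq.trans hval1
      -- p^k ∣ (m₂ - ε)^2
      have hcop2 : IsCoprime m₂ ((p:ℤ)^k) := coprime_pk p hp m₂ hm₂ k
      have hKF := key_formula m₂ ((p:ℤ)^k) hn0 hcop2
      rw [hSval] at hKF
      set A := ∑ j ∈ Ico (0:ℤ) ((p:ℤ)^k), j * ((m₂*j) % ((p:ℤ)^k)) with hAdef
      have hp1 : (p:ℝ)^(2*r-k:ℕ) * ((p:ℝ)^k)^2 = (p:ℝ)^(k+2*r) := by
        rw [← pow_mul, ← pow_add]; congr 1; omega
      have hIntEq : (12*A : ℤ)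
          = 3*((p:ℤ)^k)^2*((p:ℤ)^k-1) + ε*(2*(p:ℤ)^k + (p:ℤ)^(k+2*r) - 3*((p:ℤ)^k)^2) := by
        have hdiv : ((p:ℝ)^k)^2 * (2/(p:ℝ)^k) = 2*(p:ℝ)^k := by
          field_simp
        have hreal : 12*((A:ℤ):ℝ)
            = 3*((p:ℝ)^k)^2*((p:ℝ)^k - 1)
              + (ε:ℝ)*(2*(p:ℝ)^k + (p:ℝ)^(k+2*r) - 3*((p:ℝ)^k)^2) := by
          push_cast at hKF
          linear_combination -hKF + (ε:ℝ)*hdiv + (ε:ℝ)*hp1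
        exact_mod_cast hreal
      obtain ⟨u, v, huv⟩ := hcop2
      have hcl := cong_lemma m₂ ((p:ℤ)^k) u (-v) hn0 (by linear_combination huv) (coprime_pk p hp m₂ hm₂ k)
      obtain ⟨w, hw⟩ := hcl
      rw [← hAdef] at hw
      have hsplit : (p:ℤ)^(k+2*r) = (p:ℤ)^k * (p:ℤ)^(2*r) := by rw [← pow_add]
      have hmu : m₂ + u = 3*(p:ℤ)^k*((p:ℤ)^k-1) + ε*(2 + (p:ℤ)^(2*r) - 3*(p:ℤ)^k) - (p:ℤ)^k*w := by
        have hmul : (p:ℤ)^k * ((m₂+u) - (3*(p:ℤ)^k*((p:ℤ)^k-1) + ε*(2 + (p:ℤ)^(2*r) - 3*(p:ℤ)^k) - (p:ℤ)^k*w)) = 0 := by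
          linear_combination hIntEq - hw + ε*hsplit
        rcases mul_eq_zero.mp hmul with h | h
        · exact absurd h (by positivity)
        · linarith
      obtain ⟨t, ht⟩ : ((p:ℤ)^k) ∣ (p:ℤ)^(2*r) := pow_dvd_pow _ hkr
      have d1 : ((p:ℤ)^k) ∣ (m₂ + u) - 2*ε - ε*(p:ℤ)^(2*r) :=
        ⟨3*((p:ℤ)^k - 1) - 3*ε - w, by linear_combination hmu⟩
      have d2 : ((p:ℤ)^k) ∣ ε*(p:ℤ)^(2*r) := ⟨ε*t, by linear_combination ε*ht⟩
      obtain ⟨s3, hs3⟩ : ((p:ℤ)^k) ∣ (m₂ + u) - 2*ε := by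
        have := dvd_add d1 d2
        have heq2 : ((m₂ + u) - 2*ε - ε*(p:ℤ)^(2*r)) + ε*(p:ℤ)^(2*r) = (m₂ + u) - 2*ε := by ring
        rwa [heq2] at this
      obtain ⟨s4, hs4⟩ : ((p:ℤ)^k) ∣ (m₂ - ε)*(u - ε) :=
        ⟨-v - ε*s3, by linear_combination (-ε)*hs3 + huv - hεε⟩
      have d5 : ((p:ℤ)^k) ∣ u*(m₂ - ε)^2 :=
        ⟨-(ε*s4) - v*(m₂-ε), by linear_combination (-ε)*hs4 + (m₂-ε)*huv - (m₂-ε)*hεε⟩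
      have hsq2 : ((p:ℤ)^k) ∣ (m₂ - ε)^2 := by
        have hcopu' : IsCoprime u ((p:ℤ)^k) := ⟨m₂, v, by linear_combination huv⟩
        exact hcopu'.symm.dvd_of_dvd_mul_left d5
      -- largest power of p dividing m₂ - ε, capped at k
      by_cases hck : (p:ℤ)^k ∣ m₂ - ε
      · -- then r = k
        have hv2 : Sded m₂ ((p:ℤ)^k) = (ε:ℝ) * (2/(p:ℝ)^k + (p:ℝ)^(2*k-k:ℕ) - 3) :=
          value_eps p hp k k hk le_rfl (by omega) ε hε 1 hone m₂ (by
            obtain ⟨c, hc⟩ := hck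
            exact ⟨c - 1, by linear_combination hc⟩)
        have hexp : (p:ℝ)^(2*k-k:ℕ) = (p:ℝ)^(2*r-k:ℕ) := by
          rw [hSval] at hv2
          rcases hε with rfl | rfl <;> push_cast at hv2 <;> linarith
        have hrk' : r = k := by
          have hNat : ((p^(2*k-k) : ℕ):ℝ) = ((p^(2*r-k) : ℕ):ℝ) := by push_cast; exact hexp
          have := Nat.pow_right_injective hp2 (Nat.cast_injective hNat)
          omega
        refine ⟨1, hone, Int.modEq_iff_dvd.mpr ?_⟩
        obtain ⟨c, hc⟩ := hck
        exact ⟨1 - c, by rw [hrk']; linear_combination -hc⟩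
      · -- the exact power a < k
        set P : ℕ → Prop := fun b => (p:ℤ)^b ∣ m₂ - ε with hPdef
        set a := Nat.findGreatest P k with hadef
        have haspec : P a := Nat.findGreatest_spec (Nat.zero_le k) (by simp [hPdef])
        have halek : a ≤ k := Nat.findGreatest_le k
        have halt : a < k := lt_of_le_of_ne halek (fun h => hck (h ▸ haspec))
        have hnot : ¬ P (a+1) := by
          intro hPa
          have := Nat.le_findGreatest (by omega : a+1 ≤ k) hPa
          omega
        obtain ⟨y, hy⟩ := haspec
        have hpy : ¬ (p:ℤ) ∣ y := by
          rintro ⟨z, hz⟩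
          exact hnot ⟨z, by rw [hy, hz]; ring⟩
        have h2a : k ≤ 2*a := by
          by_contra hcon
          push_neg at hcon
          obtain ⟨s, hs⟩ := hsq2
          have hpk2 : (p:ℤ)^k = (p:ℤ)^(2*a) * (p:ℤ)^(k-2*a) := by
            rw [← pow_add]; congr 1; omega
          have h1 : (p:ℤ)^(2*a) * (y^2) = (p:ℤ)^(2*a) * ((p:ℤ)^(k-2*a) * s) := by
            have hsqq : (p:ℤ)^a * (p:ℤ)^a = (p:ℤ)^(2*a) := by rw [← pow_add]; congr 1; omega
            linear_combination hs - (m₂ - ε + (p:ℤ)^a*y)*hy - y^2*hsqq + s*hpk2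
          have hcancel : y^2 = (p:ℤ)^(k-2*a) * s :=
            mul_left_cancel₀ (by positivity) h1
          have hdy : (p:ℤ) ∣ y^2 := by
            rw [hcancel]
            exact Dvd.dvd.mul_right (dvd_pow_self _ (by omega : k-2*a ≠ 0)) s
          exact hpy ((Nat.prime_iff_prime_int.mp hp).dvd_of_dvd_pow hdy)
        have ha1 : 0 < a := by omega
        have hv2 : Sded m₂ ((p:ℤ)^k) = (ε:ℝ) * (2/(p:ℝ)^k + (p:ℝ)^(2*a-k:ℕ) - 3) :=
          value_eps p hp a k ha1 halek h2a ε hε y hpy m₂ ⟨0, by linear_combination hy⟩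
        have hexp : (p:ℝ)^(2*a-k:ℕ) = (p:ℝ)^(2*r-k:ℕ) := by
          rw [hSval] at hv2
          rcases hε with rfl | rfl <;> push_cast at hv2 <;> linarith
        have har : a = r := by
          have hNat : ((p^(2*a-k) : ℕ):ℝ) = ((p^(2*r-k) : ℕ):ℝ) := by push_cast; exact hexp
          have := Nat.pow_right_injective hp2 (Nat.cast_injective hNat)
          omega
        refine ⟨y, hpy, Int.modEq_iff_dvd.mpr ⟨0, ?_⟩⟩
        rw [← har]
        linear_combination -hy
    · -- easy direction
      rintro ⟨m', hm', hcong⟩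
      have hdvd : (p:ℤ)^k ∣ m₂ - (ε + (p:ℤ)^r * m') := by
        have h1 := Int.modEq_iff_dvd.mp hcong
        have h2 := dvd_neg.mpr h1
        rw [neg_sub] at h2
        exact h2
      rw [value_eps p hp r k hr hrk hkr ε hε m' hm' m₂ hdvd, hval1]
  · rw [hval1, hzpow]
end

section
/- Let n be a positive integer, m an integer with gcd(m, n) = 1, m* an integer with m·m* ≡ 1 (mod n), and t a positive integer with t ≡ m − m* (mod n). Then S(1 + m·t, n·t) = 2/(n·t) + t/n − 3. -/
open scoped Classical
open Finset

private lemma Ico_top (a b : ℤ) (h : a ≤ b) {M : Type*} [AddCommMonoid M] (f : ℤ → M) :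
    ∑ c ∈ Finset.Ico a (b+1), f c = (∑ c ∈ Finset.Ico a b, f c) + f b := by
  have he : Finset.Ico a (b+1) = insert b (Finset.Ico a b) := by
    ext x; simp only [Finset.mem_Ico, Finset.mem_insert]; omega
  rw [he, Finset.sum_insert (by simp), add_comm]

private lemma sum_const_Ico_s7 (a b k : ℤ) (h : a ≤ b) :
    ∑ _c ∈ Finset.Ico a b, k = (b - a) * k := by
  refine Int.le_induction (motive := fun b _ => ∑ _c ∈ Finset.Ico a b, k = (b - a) * k) ?_ ?_ b h
  · simp
  · intro b hb ih; rw [Ico_top a b hb, ih]; ring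

private lemma gauss1 (a b : ℤ) (h : a ≤ b) :
    2 * ∑ c ∈ Finset.Ico a b, c = b*(b-1) - a*(a-1) := by
  refine Int.le_induction
    (motive := fun b _ => 2 * ∑ c ∈ Finset.Ico a b, c = b*(b-1) - a*(a-1)) ?_ ?_ b h
  · simp
  · intro b hb ih; rw [Ico_top a b hb, mul_add, ih]; ring

private lemma gauss2 (a b : ℤ) (h : a ≤ b) :
    6 * ∑ c ∈ Finset.Ico a b, c^2 = b*(b-1)*(2*b-1) - a*(a-1)*(2*a-1) := by
  refine Int.le_induction
    (motive := fun b _ => 6 * ∑ c ∈ Finset.Ico a b, c^2 = b*(b-1)*(2*b-1) - a*(a-1)*(2*a-1)) ?_ ?_ b h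
  · simp
  · intro b hb ih; rw [Ico_top a b hb, mul_add, ih]; ring

private lemma emod_mul_emod (nn v x : ℤ) : (v * (x % nn)) % nn = (v * x) % nn := by
  conv_lhs => rw [Int.mul_emod]
  conv_rhs => rw [Int.mul_emod]
  rw [Int.emod_emod_of_dvd _ dvd_rfl]

private lemma sum_unit_perm (nn u v : ℤ) (hn : 0 < nn) (huv : (u*v) % nn = 1 % nn)
    (g : ℤ → ℤ) :
    ∑ r ∈ Finset.Ico 0 nn, g ((u*r) % nn) = ∑ r ∈ Finset.Ico 0 nn, g r := by
  have key : ∀ w z r : ℤ, (w*z) % nn = 1 % nn → r ∈ Finset.Ico 0 nn →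
      (w * ((z*r) % nn)) % nn = r := by
    intro w z r hwz hr
    rw [Finset.mem_Ico] at hr
    rw [emod_mul_emod, ← mul_assoc, Int.mul_emod, hwz, ← Int.mul_emod,
      one_mul, Int.emod_eq_of_lt hr.1 hr.2]
  have hvu : (v*u) % nn = 1 % nn := by rwa [mul_comm]
  refine Finset.sum_nbij' (fun r => (u*r) % nn) (fun r => (v*r) % nn) ?_ ?_ ?_ ?_ ?_
  · intro r _
    rw [Finset.mem_Ico]
    exact ⟨Int.emod_nonneg _ (by omega), Int.emod_lt_of_pos _ hn⟩
  · intro r _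
    rw [Finset.mem_Ico]
    exact ⟨Int.emod_nonneg _ (by omega), Int.emod_lt_of_pos _ hn⟩
  · intro r hr; exact key v u r hvu hr
  · intro r hr; exact key u v r huv hr
  · intro r _; rfl

private lemma sum_divmod (nn tt : ℤ) (hn : 0 < nn) (ht : 0 < tt) (f : ℤ → ℤ) :
    ∑ j ∈ Finset.Ico 0 (nn*tt), f j
      = ∑ c ∈ Finset.Ico 0 tt, ∑ r ∈ Finset.Ico 0 nn, f (c*nn + r) := by
  rw [← Finset.sum_product']
  refine (Finset.sum_nbij' (fun p => p.1 * nn + p.2) (fun j => (j / nn, j % nn))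
    ?_ ?_ ?_ ?_ ?_).symm
  · rintro ⟨c, r⟩ hp
    simp only [Finset.mem_product, Finset.mem_Ico] at hp
    dsimp only
    rw [Finset.mem_Ico]
    constructor
    · have : 0 ≤ c * nn := mul_nonneg hp.1.1 (le_of_lt hn)
      omega
    · have h1 : c * nn ≤ (tt - 1) * nn := mul_le_mul_of_nonneg_right (by omega) (le_of_lt hn)
      nlinarith [hp.2.2, hp.1.2]
  · intro j hj
    rw [Finset.mem_Ico] at hj
    simp only [Finset.mem_product, Finset.mem_Ico]
    refine ⟨⟨Int.ediv_nonneg hj.1 (le_of_lt hn), ?_⟩,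
      Int.emod_nonneg _ (by omega), Int.emod_lt_of_pos _ hn⟩
    rw [Int.ediv_lt_iff_lt_mul hn]
    linarith [hj.2]
  · rintro ⟨c, r⟩ hp
    simp only [Finset.mem_product, Finset.mem_Ico] at hp
    have h1 : (c * nn + r) / nn = c := by
      rw [add_comm, Int.add_mul_ediv_right _ _ (by omega : nn ≠ 0),
        Int.ediv_eq_zero_of_lt hp.2.1 hp.2.2, zero_add]
    have h2 : (c * nn + r) % nn = r := by
      rw [add_comm, Int.add_mul_emod_self_right, Int.emod_eq_of_lt hp.2.1 hp.2.2]
    simp [h1, h2]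
  · intro j _
    dsimp only
    linear_combination Int.mul_ediv_add_emod j nn
  · rintro ⟨c, r⟩ _; rfl

private lemma saw_eq (N k : ℤ) (hN : 0 < N) (hk : ¬ (N ∣ k)) :
    saw ((k:ℝ)/N) = ((k % N : ℤ):ℝ)/N - 1/2 := by
  have hNR : (0:ℝ) < (N:ℝ) := by exact_mod_cast hN
  have hq := Int.mul_ediv_add_emod k N
  have hm0 := Int.emod_nonneg k (by omega : N ≠ 0)
  have hm1 := Int.emod_lt_of_pos k hN
  have hqR : (k:ℝ) = N*((k / N : ℤ):ℝ) + ((k % N : ℤ):ℝ) := by exact_mod_cast hq.symm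
  have hnotint : ¬ ∃ z : ℤ, (z:ℝ) = (k:ℝ)/N := by
    rintro ⟨z, hz⟩
    apply hk
    refine ⟨z, ?_⟩
    have hzz : k = z * N := by
      have : (z:ℝ)*N = k := by field_simp at hz; linarith [hz]
      exact_mod_cast this.symm
    linarith [hzz]
  have hm0R : (0:ℝ) ≤ ((k % N : ℤ):ℝ) := by exact_mod_cast hm0
  have hm1R : ((k % N : ℤ):ℝ) < (N:ℝ) := by exact_mod_cast hm1
  have hfloor : ⌊(k:ℝ)/N⌋ = k / N := by
    rw [Int.floor_eq_iff]
    constructor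
    · rw [le_div_iff₀ hNR]
      linarith [hqR, hm0R]
    · rw [div_lt_iff₀ hNR]
      push_cast
      linarith [hqR, hm1R]
  rw [saw, if_neg hnotint, hfloor]
  field_simp
  linarith [hqR]

private lemma inner_eval (n t m r : ℤ) (hn : 0 < n) (ht : 0 < t)
    (hr : 0 ≤ r) (hrn : r < n) :
    6*n*(∑ c ∈ Finset.Ico (0:ℤ) t, (c*n + r) * (((1+m*t)*(c*n+r)) % (n*t)))
      = (n^3*t - 3*n^3*t^2 + 2*n^3*t^3) + (-3*n^2*t)*r + (3*n*t)*r^2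
        + (-3*n^2*t^3)*((m*r)%n) + (3*n*t^3)*((m*r)%n)^2
        + (6*n^2*t^2 - 3*n^2*t)*(((1+m*t)*r)%n) + (3*n*t)*(((1+m*t)*r)%n)^2
        + (6*n*t^2)*(r*((m*r)%n)) + (-6*n*t^2)*(((m*r)%n)*(((1+m*t)*r)%n)) := by
  set ρ := (m*r) % n with hρdef
  set τ := ((1+m*t)*r) % n with hτdef
  have hρ0 : 0 ≤ ρ := Int.emod_nonneg _ (by omega)
  have hρn : ρ < n := Int.emod_lt_of_pos _ hn
  have hτ0 : 0 ≤ τ := Int.emod_nonneg _ (by omega)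
  have hτn : τ < n := Int.emod_lt_of_pos _ hn
  have hmr : n * ((m*r)/n) + ρ = m*r := Int.mul_ediv_add_emod (m*r) n
  set e := (m*r)/n with hedef
  have hsplit : t*ρ + r = (1+m*t)*r + n*(-(t*e)) := by linear_combination t*hmr
  have hτeq : (t*ρ + r) % n = τ := by rw [hsplit, Int.add_mul_emod_self_left, hτdef]
  set d := (t*ρ + r)/n with hddef
  have hdτ : n*d + τ = t*ρ + r := by
    rw [← hτeq, hddef]; exact Int.mul_ediv_add_emod _ n
  have hd0 : 0 ≤ d := Int.ediv_nonneg (by positivity) hn.le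
  have hdt : d ≤ t := by
    have h1 : t*ρ ≤ t*(n-1) := mul_le_mul_of_nonneg_left (by omega) ht.le
    nlinarith
  have hσ : ∀ c ∈ Finset.Ico (0:ℤ) t,
      ((1+m*t)*(c*n+r)) % (n*t)
        = c*n + r + t*ρ - (if n*t ≤ c*n + r + t*ρ then n*t else 0) := by
    intro c hc
    rw [Finset.mem_Ico] at hc
    have hrew : (1+m*t)*(c*n+r) = (c*n + r + t*ρ) + (n*t)*(m*c + e) := by
      linear_combination (-t)*hmr
    have hb1 : 0 ≤ c*n := mul_nonneg hc.1 hn.le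
    have hb2 : c*n ≤ (t-1)*n := mul_le_mul_of_nonneg_right (by omega) hn.le
    have hb3 : t*ρ ≤ t*(n-1) := mul_le_mul_of_nonneg_left (by omega) ht.le
    have hb4 : 0 ≤ t*ρ := mul_nonneg ht.le hρ0
    rw [hrew, Int.add_mul_emod_self_left]
    split_ifs with h
    · have h2 : (c*n + r + t*ρ) % (n*t) = (c*n + r + t*ρ - n*t) % (n*t) := by
        conv_lhs => rw [show c*n + r + t*ρ = (c*n + r + t*ρ - n*t) + (n*t)*1 by ring]
        rw [Int.add_mul_emod_self_left]
      rw [h2, Int.emod_eq_of_lt (by linarith) (by nlinarith)]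
    · rw [Int.emod_eq_of_lt (by linarith) (by linarith), sub_zero]
  have hsum1 : ∑ c ∈ Finset.Ico (0:ℤ) t, (c*n + r) * (((1+m*t)*(c*n+r)) % (n*t))
      = ∑ c ∈ Finset.Ico (0:ℤ) t,
          ((c*n+r)*(c*n+r+t*ρ) - (if n*t ≤ c*n + r + t*ρ then (c*n+r)*(n*t) else 0)) := by
    refine Finset.sum_congr rfl fun c hc => ?_
    rw [hσ c hc]; split_ifs <;> ring
  have hfil : (Finset.Ico (0:ℤ) t).filter (fun c => n*t ≤ c*n + r + t*ρ)
      = Finset.Ico (t-d) t := by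
    ext c
    simp only [Finset.mem_filter, Finset.mem_Ico]
    constructor
    · rintro ⟨⟨h0, h1⟩, h2⟩
      refine ⟨?_, h1⟩
      by_contra hcon
      push_neg at hcon
      have hle : c*n ≤ (t-d-1)*n := mul_le_mul_of_nonneg_right (by omega) hn.le
      nlinarith
    · rintro ⟨h0, h1⟩
      have h00 : 0 ≤ c := by omega
      refine ⟨⟨h00, h1⟩, ?_⟩
      have hge : (t-d)*n ≤ c*n := mul_le_mul_of_nonneg_right h0 hn.le
      nlinarith
  have hsum2 : ∑ c ∈ Finset.Ico (0:ℤ) t, (if n*t ≤ c*n + r + t*ρ then (c*n+r)*(n*t) else 0)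
      = ∑ c ∈ Finset.Ico (t-d) t, (c*n+r)*(n*t) := by
    rw [← Finset.sum_filter, hfil]
  -- closed forms
  have hA : ∑ c ∈ Finset.Ico (0:ℤ) t, (c*n+r)*(c*n+r+t*ρ)
      = n^2*(∑ c ∈ Finset.Ico (0:ℤ) t, c^2)
        + (2*n*r + n*t*ρ)*(∑ c ∈ Finset.Ico (0:ℤ) t, c) + (t-0)*(r^2 + r*t*ρ) := by
    rw [Finset.mul_sum, Finset.mul_sum, ← sum_const_Ico_s7 0 t (r^2 + r*t*ρ) ht.le,
      ← Finset.sum_add_distrib, ← Finset.sum_add_distrib]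
    exact Finset.sum_congr rfl fun c _ => by ring
  have hB : ∑ c ∈ Finset.Ico (t-d) t, (c*n+r)*(n*t)
      = (n^2*t)*(∑ c ∈ Finset.Ico (t-d) t, c) + (t-(t-d))*(r*(n*t)) := by
    rw [Finset.mul_sum, ← sum_const_Ico_s7 (t-d) t (r*(n*t)) (by omega),
      ← Finset.sum_add_distrib]
    exact Finset.sum_congr rfl fun c _ => by ring
  have g1a := gauss1 0 t ht.le
  have g2a := gauss2 0 t ht.le
  have g1b := gauss1 (t-d) t (by omega)
  have hτsub : τ = t*ρ + r - n*d := by linarith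
  rw [hsum1, Finset.sum_sub_distrib, hsum2, hA, hB, hτsub]
  linear_combination (n^3)*g2a + (3*n*(2*n*r + n*t*ρ))*g1a + (-3*n^3*t)*g1b

theorem square_free_equal_dedekind_sums (n : ℤ) (hn : 0 < n) (m mstar : ℤ)
    (hm : Int.gcd m n = 1) (hinv : m * mstar ≡ 1 [ZMOD n])
    (t : ℤ) (ht : 0 < t) (htc : t ≡ m - mstar [ZMOD n]) :
    Sded (1 + m * t) (n * t) = 2 / ((n : ℝ) * t) + (t : ℝ) / n - 3 := by
  have hN : 0 < n * t := mul_pos hn ht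
  obtain ⟨β, hβ⟩ : ∃ β, m * mstar = 1 + n * β := by
    obtain ⟨β, hb⟩ := Int.ModEq.dvd hinv
    exact ⟨-β, by linarith⟩
  obtain ⟨α, hα⟩ : ∃ α, m - mstar = t + n * α := by
    obtain ⟨α, ha⟩ := Int.ModEq.dvd htc
    exact ⟨α, by linarith⟩
  have hkey : (1 + m*t) * (1 - mstar * t) = 1 + (n*t) * (α - β * t) := by
    linear_combination t * hα - t^2 * hβ
  have h1mt : 1 + m*t = m^2 - n*(β + m*α) := by
    linear_combination (-m) * hα - hβ
  have hmsq : ((1 + m*t) * mstar^2) % n = 1 % n := by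
    rw [show (1 + m*t) * mstar^2 = 1 + n * (2*β + n*β^2 - (β + m*α)*mstar^2) by
      linear_combination mstar^2 * h1mt + (m*mstar + 1 + n*β) * hβ]
    rw [Int.add_mul_emod_self_left]
  have hmm : (m * mstar) % n = 1 % n := by
    rw [hβ, Int.add_mul_emod_self_left]
  have haN : ((1 + m*t) * (1 - mstar*t)) % (n*t) = 1 % (n*t) := by
    rw [hkey, Int.add_mul_emod_self_left]
  have hcop : IsCoprime (n*t) (1 + m*t) :=
    ⟨-(α - β*t), 1 - mstar*t, by linear_combination hkey⟩
  have htau : ∀ r : ℤ, ((1 + m*t) * r) % n = (m * ((m*r) % n)) % n := by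
    intro r
    have h1 : ((1 + m*t)*r) % n = (m^2*r) % n := by
      rw [show (1 + m*t)*r = m^2*r + n*(-(β + m*α)*r) by linear_combination r * h1mt,
        Int.add_mul_emod_self_left]
    rw [h1, emod_mul_emod]
    congr 1
    ring
  have hnR : ((n:ℝ)) ≠ 0 := by positivity
  have htR : ((t:ℝ)) ≠ 0 := by positivity
  have hNR : (((n*t : ℤ)):ℝ) ≠ 0 := by
    have : ((n*t : ℤ):ℝ) = (n:ℝ)*(t:ℝ) := by push_cast; ring
    rw [this]; positivity
  set W : ℤ := ∑ j ∈ Finset.Ico 0 (n*t),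
      (2*j - n*t) * (2*(((1 + m*t)*j) % (n*t)) - n*t) with hWdef
  -- Step 1 : ded = W/(4N²) - 1/4
  have hded : ded (1 + m*t) (n*t) = ((W:ℝ))/(4*((n*t:ℤ):ℝ)^2) - 1/4 := by
    have h1N : (1:ℤ) ≤ n*t := hN
    have hsawN : saw (((n*t:ℤ):ℝ)/((n*t:ℤ):ℝ)) = 0 := by
      rw [div_self hNR, saw, if_pos ⟨1, by norm_num⟩]
    have e1 : ded (1 + m*t) (n*t)
        = ∑ j ∈ Finset.Ico (1:ℤ) (n*t),
            saw ((j:ℝ)/((n*t:ℤ):ℝ)) * saw (((1 + m*t :ℤ):ℝ) * j / ((n*t:ℤ):ℝ)) := by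
      rw [ded, show Finset.Icc (1:ℤ) (n*t) = Finset.Ico (1:ℤ) (n*t+1) from rfl,
        Ico_top 1 (n*t) h1N, hsawN, zero_mul, add_zero]
    have e2 : ∀ j ∈ Finset.Ico (1:ℤ) (n*t),
        saw ((j:ℝ)/((n*t:ℤ):ℝ)) * saw (((1 + m*t:ℤ):ℝ) * j / ((n*t:ℤ):ℝ))
          = (((2*j - n*t) * (2*(((1 + m*t)*j) % (n*t)) - n*t) : ℤ):ℝ)
              /(4*((n*t:ℤ):ℝ)^2) := by
      intro j hj
      rw [Finset.mem_Ico] at hj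
      have hj1 : ¬ ((n*t) ∣ j) := by
        intro hd
        have := Int.le_of_dvd (by omega) hd
        omega
      have hj2 : ¬ ((n*t) ∣ (1 + m*t)*j) := fun hd => hj1 (hcop.dvd_of_dvd_mul_left hd)
      have f1 := saw_eq (n*t) j hN hj1
      have f2 := saw_eq (n*t) ((1 + m*t)*j) hN hj2
      have hc2 : ((1 + m*t:ℤ):ℝ) * (j:ℝ) / ((n*t:ℤ):ℝ) = (((1 + m*t)*j : ℤ):ℝ)/((n*t:ℤ):ℝ) := by
        push_cast; ring
      rw [hc2, f1, f2, Int.emod_eq_of_lt (by omega) hj.2]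
      field_simp
      push_cast
      ring
    rw [e1, Finset.sum_congr rfl e2, ← Finset.sum_div, ← Int.cast_sum]
    have e3 : Finset.Ico (0:ℤ) (n*t) = insert 0 (Finset.Ico (1:ℤ) (n*t)) := by
      ext x; simp only [Finset.mem_Ico, Finset.mem_insert]; omega
    have e4 : W = (2*0 - n*t) * (2*(((1 + m*t)*0) % (n*t)) - n*t)
        + ∑ j ∈ Finset.Ico (1:ℤ) (n*t), (2*j - n*t)*(2*(((1 + m*t)*j) % (n*t)) - n*t) := by
      rw [hWdef, e3, Finset.sum_insert (by simp)]
    have e5 : (2*0 - n*t) * (2*(((1 + m*t)*0) % (n*t)) - n*t) = (n*t)^2 := by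
      norm_num
      ring
    have e6 : (∑ j ∈ Finset.Ico (1:ℤ) (n*t), (2*j - n*t)*(2*(((1 + m*t)*j) % (n*t)) - n*t))
        = W - (n*t)^2 := by
      rw [e4, e5]; ring
    rw [e6]
    push_cast
    field_simp
  -- Step 2 : the integer identities
  have hSj : 2 * (∑ j ∈ Finset.Ico (0:ℤ) (n*t), j) = (n*t)*((n*t)-1) := by
    have := gauss1 0 (n*t) hN.le
    linarith
  have hSσ : (∑ j ∈ Finset.Ico (0:ℤ) (n*t), ((1 + m*t)*j) % (n*t))
      = ∑ j ∈ Finset.Ico (0:ℤ) (n*t), j :=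
    sum_unit_perm (n*t) (1 + m*t) (1 - mstar*t) hN haN id
  set Q : ℤ := ∑ j ∈ Finset.Ico 0 (n*t), j * (((1 + m*t)*j) % (n*t)) with hQdef
  have hWexp : W = 4*Q - 2*(n*t)*(∑ j ∈ Finset.Ico (0:ℤ) (n*t), j)
      - 2*(n*t)*(∑ j ∈ Finset.Ico (0:ℤ) (n*t), j) + (n*t - 0)*((n*t)^2) := by
    rw [hWdef, hQdef]
    rw [show (∑ j ∈ Finset.Ico (0:ℤ) (n*t), (2*j - n*t) * (2*(((1 + m*t)*j) % (n*t)) - n*t))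
        = ∑ j ∈ Finset.Ico (0:ℤ) (n*t),
            (4*(j * (((1 + m*t)*j) % (n*t))) - 2*(n*t)*j
              - 2*(n*t)*(((1 + m*t)*j) % (n*t)) + (n*t)^2)
      from Finset.sum_congr rfl fun j _ => by ring]
    rw [Finset.sum_add_distrib, Finset.sum_sub_distrib, Finset.sum_sub_distrib,
      ← Finset.mul_sum, ← Finset.mul_sum, ← Finset.mul_sum,
      sum_const_Ico_s7 0 (n*t) ((n*t)^2) hN.le, hSσ]
  have hQ12 : 12 * Q = 3*(n*t)^3 - 6*(n*t)^2 + (2 + t^2)*(n*t) := by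
    have hre : Q = ∑ c ∈ Finset.Ico (0:ℤ) t, ∑ r ∈ Finset.Ico (0:ℤ) n,
        (c*n + r) * (((1 + m*t)*(c*n + r)) % (n*t)) :=
      sum_divmod n t hn ht _
    rw [Finset.sum_comm] at hre
    have h6 : 6*n*Q = ∑ r ∈ Finset.Ico (0:ℤ) n, (6*n*(∑ c ∈ Finset.Ico (0:ℤ) t,
        (c*n + r) * (((1 + m*t)*(c*n + r)) % (n*t)))) := by
      rw [hre, Finset.mul_sum]
    have h7 : ∀ r ∈ Finset.Ico (0:ℤ) n, 6*n*(∑ c ∈ Finset.Ico (0:ℤ) t,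
        (c*n + r) * (((1 + m*t)*(c*n + r)) % (n*t)))
        = (n^3*t - 3*n^3*t^2 + 2*n^3*t^3) + (-3*n^2*t)*r + (3*n*t)*r^2
          + (-3*n^2*t^3)*((m*r)%n) + (3*n*t^3)*((m*r)%n)^2
          + (6*n^2*t^2 - 3*n^2*t)*(((1 + m*t)*r)%n) + (3*n*t)*(((1 + m*t)*r)%n)^2
          + (6*n*t^2)*(r*((m*r)%n)) + (-6*n*t^2)*(((m*r)%n)*(((1 + m*t)*r)%n)) := by
      intro r hr
      rw [Finset.mem_Ico] at hr
      exact inner_eval n t m r hn ht hr.1 hr.2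
    rw [Finset.sum_congr rfl h7] at h6
    rw [Finset.sum_add_distrib, Finset.sum_add_distrib, Finset.sum_add_distrib,
      Finset.sum_add_distrib, Finset.sum_add_distrib, Finset.sum_add_distrib,
      Finset.sum_add_distrib, Finset.sum_add_distrib,
      ← Finset.mul_sum, ← Finset.mul_sum, ← Finset.mul_sum, ← Finset.mul_sum,
      ← Finset.mul_sum, ← Finset.mul_sum, ← Finset.mul_sum, ← Finset.mul_sum,
      sum_const_Ico_s7 0 n (n^3*t - 3*n^3*t^2 + 2*n^3*t^3) hn.le] at h6
    have p1 : ∑ r ∈ Finset.Ico (0:ℤ) n, (m*r)%n = ∑ r ∈ Finset.Ico (0:ℤ) n, r :=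
      sum_unit_perm n m mstar hn hmm id
    have p2 : ∑ r ∈ Finset.Ico (0:ℤ) n, ((m*r)%n)^2 = ∑ r ∈ Finset.Ico (0:ℤ) n, r^2 :=
      sum_unit_perm n m mstar hn hmm (fun x => x^2)
    have p3 : ∑ r ∈ Finset.Ico (0:ℤ) n, ((1 + m*t)*r)%n = ∑ r ∈ Finset.Ico (0:ℤ) n, r :=
      sum_unit_perm n (1 + m*t) (mstar^2) hn hmsq id
    have p4 : ∑ r ∈ Finset.Ico (0:ℤ) n, (((1 + m*t)*r)%n)^2
        = ∑ r ∈ Finset.Ico (0:ℤ) n, r^2 :=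
      sum_unit_perm n (1 + m*t) (mstar^2) hn hmsq (fun x => x^2)
    have p5 : ∑ r ∈ Finset.Ico (0:ℤ) n, ((m*r)%n)*(((1 + m*t)*r)%n)
        = ∑ r ∈ Finset.Ico (0:ℤ) n, r*((m*r)%n) := by
      rw [show (∑ r ∈ Finset.Ico (0:ℤ) n, ((m*r)%n)*(((1 + m*t)*r)%n))
          = ∑ r ∈ Finset.Ico (0:ℤ) n, ((m*r)%n)*((m*((m*r)%n))%n)
        from Finset.sum_congr rfl fun r _ => by rw [htau r]]
      exact sum_unit_perm n m mstar hn hmm (fun x => x*((m*x)%n))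
    rw [p1, p2, p3, p4, p5] at h6
    have g1 := gauss1 0 n hn.le
    have g2 := gauss2 0 n hn.le
    have hcan : n * (12 * Q) = n * (3*(n*t)^3 - 6*(n*t)^2 + (2 + t^2)*(n*t)) := by
      linear_combination 2*h6 + (-6*n^2*t + 6*n^2*t^2 - 3*n^2*t^3)*g1 + (2*n*t + n*t^3)*g2
    exact mul_left_cancel₀ (by omega) hcan
  have hW3 : 3 * W = (2 + t^2) * (n*t) := by
    linear_combination 3*hWexp + hQ12 - 6*(n*t)*hSj
  -- Conclusion
  rw [Sded, hded]
  have hW3R : (3:ℝ) * (W:ℝ) = (2 + (t:ℝ)^2) * ((n:ℝ)*(t:ℝ)) := by exact_mod_cast hW3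
  have hWR : (W:ℝ) = (2 + (t:ℝ)^2) * ((n:ℝ)*(t:ℝ))/3 := by linarith
  rw [hWR]
  have hcast : ((n*t:ℤ):ℝ) = (n:ℝ)*(t:ℝ) := by push_cast; ring
  rw [hcast]
  field_simp
  ring
end
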